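/- arXiv:1503.08632 — 2 statements merged into one kernel-verified Lean document; each statement's English description precedes it below -/
import Mathlib

section
/- For the (L,R)-random walk, for every x ∈ (0,1) and all i, j ∈ {0,…,M−1}: Σ_{k=0}^{M−1} (δ_{ik} − π_{k−i}·x) · H^±_{kj}(x) = δ_{ij}·ϖ_i, where δ is the Kronecker delta. Equivalently, H^±_{ij}(x) = δ_{ij}·ϖ_i + x·Σ_{k=0}^{M−1} π_{k−i} H^±_{kj}(x). -/
open MeasureTheory ProbabilityTheory
open scoped Classical

noncomputable section

namespace LRWalk

variable {Ω : Type*} [MeasurableSpace Ω]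

/-- Position of the `(L,R)`-random walk started at `i` after `m` steps,
`X_m = i + U_1 + ⋯ + U_m`. -/
def pos (U : ℕ → Ω → ℤ) (i : ℤ) (m : ℕ) (ω : Ω) : ℤ :=
  i + ∑ ℓ ∈ Finset.Icc 1 m, U ℓ ω

/-- `j ∈ E° = {0,…,M−1}`. -/
def inEo (M : ℕ) (j : ℤ) : Prop := 0 ≤ j ∧ j ≤ (M : ℤ) - 1

/-- `τ° = m`, where `τ° = inf{m ≥ 1 : X_m ∈ {0,…,M−1}}` for the walk started at `i`. -/
def tauOEq (U : ℕ → Ω → ℤ) (M : ℕ) (i : ℤ) (m : ℕ) (ω : Ω) : Prop :=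
  1 ≤ m ∧ (∀ k, 1 ≤ k → k < m → ¬ inEo M (pos U i k ω)) ∧ inEo M (pos U i m ω)

/-- `H°_{ij}(x) = Σ_{m ≥ 1} P_i(τ° = m, X_m = j)·x^m`. -/
def Hcirc (μ : Measure Ω) (U : ℕ → Ω → ℤ) (M : ℕ) (i j : ℤ) (x : ℝ) : ℝ :=
  ∑' m : ℕ, (μ {ω | tauOEq U M i m ω ∧ pos U i m ω = j}).toReal * x ^ m

/-- `G_{ij}(x) = Σ_{m ≥ 0} P_i(X_m = j)·x^m`. -/
def Gpoint (μ : Measure Ω) (U : ℕ → Ω → ℤ) (i j : ℤ) (x : ℝ) : ℝ :=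
  ∑' m : ℕ, (μ {ω | pos U i m ω = j}).toReal * x ^ m


/-- `τ^± = m`, where `τ^± = inf{m ≥ 1 : X_m ∉ {0,…,M−1}}` (first exit time from
`E° = {0,…,M−1}`) for the walk started at `i`. -/
def tauPmEq (U : ℕ → Ω → ℤ) (M : ℕ) (i : ℤ) (m : ℕ) (ω : Ω) : Prop :=
  1 ≤ m ∧ (∀ k, 1 ≤ k → k < m → inEo M (pos U i k ω)) ∧ ¬ inEo M (pos U i m ω)

/-- `H^±_{ij}(x) = Σ_{m ≥ 1} P_i(τ^± = m, X_{m−1} = j)·x^{m−1}`. -/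
def Hpm (μ : Measure Ω) (U : ℕ → Ω → ℤ) (M : ℕ) (i j : ℤ) (x : ℝ) : ℝ :=
  ∑' m : ℕ, (μ {ω | tauPmEq U M i m ω ∧ pos U i (m - 1) ω = j}).toReal * x ^ (m - 1)

/-- `ϖ_i = P_i(X_1 ∉ {0,…,M−1})`. -/
def varpi (μ : Measure Ω) (U : ℕ → Ω → ℤ) (M : ℕ) (i : ℤ) : ℝ :=
  (μ {ω | ¬ inEo M (pos U i 1 ω)}).toReal
end LRWalk


namespace LRWalkAux

open LRWalk

variable {Ω : Type*} [MeasurableSpace Ω]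

/-- Partial sum of steps `w 0 + ⋯ + w (k-1)`. -/
def S (w : ℕ → ℤ) (k : ℕ) : ℤ := ∑ ℓ ∈ Finset.range k, w ℓ

/-- Combinatorial version of the exit event for tuples of steps. -/
def Cw (M : ℕ) (i j : ℤ) (m : ℕ) (w : ℕ → ℤ) : Prop :=
  (∀ k, 1 ≤ k → k < m → inEo M (i + S w k)) ∧ ¬ inEo M (i + S w m) ∧ i + S w (m - 1) = j

/-- Extension of a finite tuple by zero. -/
def extv {m : ℕ} (u : Fin m → ℤ) : ℕ → ℤ := fun n => if h : n < m then u ⟨n, h⟩ else 0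

lemma extv_lt {m : ℕ} (u : Fin m → ℤ) {n : ℕ} (h : n < m) : extv u n = u ⟨n, h⟩ := dif_pos h

lemma extv_cons_zero {m : ℕ} (a : ℤ) (v : Fin m → ℤ) : extv (Fin.cons a v) 0 = a := by
  rw [extv_lt (Fin.cons a v) (Nat.succ_pos m),
    show (⟨0, Nat.succ_pos m⟩ : Fin (m + 1)) = 0 from Fin.ext rfl]
  exact Fin.cons_zero (α := fun _ => ℤ) a v

lemma extv_cons_succ {m : ℕ} (a : ℤ) (v : Fin m → ℤ) (n : ℕ) :
    extv (Fin.cons a v) (n + 1) = extv v n := by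
  unfold extv
  by_cases h : n < m
  · rw [dif_pos (by omega : n + 1 < m + 1), dif_pos h]
    have : (⟨n + 1, by omega⟩ : Fin (m + 1)) = Fin.succ ⟨n, h⟩ := rfl
    rw [this, Fin.cons_succ]
  · rw [dif_neg (by omega), dif_neg h]

lemma S_zero (w : ℕ → ℤ) : S w 0 = 0 := by simp [S]

lemma S_cons {m : ℕ} (a : ℤ) (v : Fin m → ℤ) (k : ℕ) :
    S (extv (Fin.cons a v)) (k + 1) = a + S (extv v) k := by
  unfold S
  rw [Finset.sum_range_succ']
  simp only [extv_cons_succ, extv_cons_zero]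
  ring

lemma S_congr {w w' : ℕ → ℤ} {m k : ℕ} (h : ∀ n < m, w n = w' n) (hk : k ≤ m) :
    S w k = S w' k :=
  Finset.sum_congr rfl fun n hn => h n (lt_of_lt_of_le (Finset.mem_range.mp hn) hk)

lemma Cw_congr {M : ℕ} {i j : ℤ} {m : ℕ} {w w' : ℕ → ℤ} (h : ∀ n < m, w n = w' n) :
    Cw M i j m w ↔ Cw M i j m w' := by
  unfold Cw
  rw [S_congr h le_rfl, S_congr h (Nat.sub_le m 1)]
  constructor <;> rintro ⟨h1, h2, h3⟩ <;> refine ⟨fun k hk1 hk2 => ?_, h2, h3⟩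
  · rw [← S_congr h hk2.le]; exact h1 k hk1 hk2
  · rw [S_congr h hk2.le]; exact h1 k hk1 hk2

lemma pos_eq (U : ℕ → Ω → ℤ) (i : ℤ) (k : ℕ) (ω : Ω) :
    pos U i k ω = i + S (fun n => U (n + 1) ω) k := by
  unfold pos S
  congr 1
  induction k with
  | zero => simp
  | succ k ih =>
      rw [Finset.sum_Icc_succ_top (by omega), Finset.sum_range_succ, ih]

variable {μ : MeasureTheory.Measure Ω} [MeasureTheory.IsProbabilityMeasure μ]
  {U : ℕ → Ω → ℤ} {π : ℤ → ℝ}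

lemma meas_step (hdist : ∀ ℓ k, (μ {ω | U ℓ ω = k}).toReal = π k) (n : ℕ) (k : ℤ) :
    μ {ω | U n ω = k} = ENNReal.ofReal (π k) := by
  rw [← hdist n k, ENNReal.ofReal_toReal (measure_ne_top μ _)]

lemma meas_cylinder (hindep : ProbabilityTheory.iIndepFun U μ)
    (hdist : ∀ ℓ k, (μ {ω | U ℓ ω = k}).toReal = π k)
    (m : ℕ) (u : Fin m → ℤ) :
    μ {ω | ∀ ℓ : Fin m, U (ℓ.val + 1) ω = u ℓ} = ∏ ℓ : Fin m, ENNReal.ofReal (π (u ℓ)) := by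
  classical
  set F : Finset ℕ := Finset.image (fun ℓ : Fin m => ℓ.val + 1) Finset.univ with hF
  have hset : {ω | ∀ ℓ : Fin m, U (ℓ.val + 1) ω = u ℓ}
      = ⋂ n ∈ F, U n ⁻¹' ({extv u (n - 1)} : Set ℤ) := by
    ext ω
    simp only [Set.mem_setOf_eq, Set.mem_iInter, hF, Finset.mem_image, Finset.mem_univ,
      true_and, Set.mem_preimage, Set.mem_singleton_iff]
    constructor
    · rintro h n ⟨ℓ, rfl⟩
      rw [Nat.add_sub_cancel, extv_lt u ℓ.isLt]
      simpa using h ℓ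
    · intro h ℓ
      have h2 := h (ℓ.val + 1) ⟨ℓ, rfl⟩
      rw [Nat.add_sub_cancel, extv_lt u ℓ.isLt] at h2
      simpa using h2
  rw [hset,
    hindep.measure_inter_preimage_eq_mul F
      (sets := fun n => ({extv u (n - 1)} : Set ℤ))
      (fun n _ => MeasurableSet.of_discrete),
    Finset.prod_image (by intro a _ b _ h; simp only at h; exact Fin.val_injective (by omega))]
  refine Finset.prod_congr rfl fun ℓ _ => ?_
  rw [Nat.add_sub_cancel, extv_lt u ℓ.isLt]
  have : U (ℓ.val + 1) ⁻¹' {u ⟨ℓ.val, ℓ.isLt⟩} = {ω | U (ℓ.val + 1) ω = u ℓ} := by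
    ext ω; simp
  rw [this, meas_step hdist]

lemma meas_pred (hindep : ProbabilityTheory.iIndepFun U μ)
    (hmeas : ∀ ℓ, Measurable (U ℓ))
    (hdist : ∀ ℓ k, (μ {ω | U ℓ ω = k}).toReal = π k)
    (m : ℕ) (C : (Fin m → ℤ) → Prop) :
    μ {ω | C (fun ℓ : Fin m => U (ℓ.val + 1) ω)}
      = ∑' u : Fin m → ℤ, if C u then ∏ ℓ : Fin m, ENNReal.ofReal (π (u ℓ)) else 0 := by
  classical
  have hAm : ∀ u : Fin m → ℤ, MeasurableSet {ω | ∀ ℓ : Fin m, U (ℓ.val + 1) ω = u ℓ} := by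
    intro u
    have : {ω | ∀ ℓ : Fin m, U (ℓ.val + 1) ω = u ℓ}
        = ⋂ ℓ : Fin m, (U (ℓ.val + 1)) ⁻¹' {u ℓ} := by
      ext ω; simp [Set.mem_iInter]
    rw [this]
    exact MeasurableSet.iInter fun ℓ => (hmeas _) MeasurableSet.of_discrete
  set A : (Fin m → ℤ) → Set Ω :=
    fun u => if C u then {ω | ∀ ℓ : Fin m, U (ℓ.val + 1) ω = u ℓ} else ∅ with hA
  have hset : {ω | C (fun ℓ : Fin m => U (ℓ.val + 1) ω)} = ⋃ u, A u := by
    ext ω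
    simp only [Set.mem_setOf_eq, Set.mem_iUnion, hA]
    constructor
    · intro h
      exact ⟨fun ℓ => U (ℓ.val + 1) ω, by rw [if_pos h]; exact fun ℓ => rfl⟩
    · rintro ⟨u, hu⟩
      by_cases hC : C u
      · rw [if_pos hC] at hu
        have : (fun ℓ : Fin m => U (ℓ.val + 1) ω) = u := funext hu
        rwa [this]
      · rw [if_neg hC] at hu; exact absurd hu (Set.notMem_empty ω)
  have hdisj : Pairwise (Function.onFun Disjoint A) := by
    intro u v huv
    simp only [Function.onFun, Set.disjoint_left, hA]
    intro ω hωu hωv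
    by_cases hCu : C u
    · by_cases hCv : C v
      · rw [if_pos hCu] at hωu; rw [if_pos hCv] at hωv
        exact huv (funext fun ℓ => (hωu ℓ).symm.trans (hωv ℓ))
      · rw [if_neg hCv] at hωv; exact hωv
    · rw [if_neg hCu] at hωu; exact hωu
  have hAmeas : ∀ u, MeasurableSet (A u) := by
    intro u
    by_cases hC : C u
    · simp only [hA, if_pos hC]; exact hAm u
    · simp only [hA, if_neg hC]; exact MeasurableSet.empty
  rw [hset, measure_iUnion hdisj hAmeas]
  refine tsum_congr fun u => ?_
  by_cases hC : C u
  · simp only [hA, if_pos hC]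
    exact meas_cylinder hindep hdist m u
  · simp only [hA, if_neg hC]; exact measure_empty

lemma meas_event (hindep : ProbabilityTheory.iIndepFun U μ)
    (hmeas : ∀ ℓ, Measurable (U ℓ))
    (hdist : ∀ ℓ k, (μ {ω | U ℓ ω = k}).toReal = π k)
    (Mn : ℕ) {m : ℕ} (hm : 1 ≤ m) (i j : ℤ) :
    μ {ω | tauPmEq U Mn i m ω ∧ pos U i (m - 1) ω = j}
      = ∑' u : Fin m → ℤ,
          if Cw Mn i j m (extv u) then ∏ ℓ : Fin m, ENNReal.ofReal (π (u ℓ)) else 0 := by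
  rw [← meas_pred hindep hmeas hdist m (fun u => Cw Mn i j m (extv u))]
  congr 1
  ext ω
  simp only [Set.mem_setOf_eq]
  have hcongr : Cw Mn i j m (extv (fun ℓ : Fin m => U (ℓ.val + 1) ω))
      ↔ Cw Mn i j m (fun n => U (n + 1) ω) :=
    Cw_congr fun n hn => extv_lt _ hn
  rw [hcongr]
  unfold tauPmEq Cw
  simp only [pos_eq U i _ ω]
  constructor
  · rintro ⟨⟨_, h1, h2⟩, h3⟩; exact ⟨h1, h2, h3⟩
  · rintro ⟨h1, h2, h3⟩; exact ⟨⟨hm, h1, h2⟩, h3⟩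

lemma Cw_cons {Mn : ℕ} {i j a : ℤ} {m : ℕ} (hm : 1 ≤ m) (v : Fin m → ℤ) :
    Cw Mn i j (m + 1) (extv (Fin.cons a v)) ↔ inEo Mn (i + a) ∧ Cw Mn (i + a) j m (extv v) := by
  have hps : ∀ k, i + S (extv (Fin.cons a v)) (k + 1) = (i + a) + S (extv v) k := by
    intro k; rw [S_cons]; ring
  have hps0 : i + S (extv (Fin.cons a v)) 1 = i + a := by
    rw [hps 0, S_zero]; ring
  have hm' : m - 1 + 1 = m := Nat.succ_pred_eq_of_pos hm
  unfold Cw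
  constructor
  · rintro ⟨h1, h2, h3⟩
    have hEo : inEo Mn (i + a) := by
      have := h1 1 le_rfl (by omega); rwa [hps0] at this
    refine ⟨hEo, fun k hk1 hk2 => ?_, ?_, ?_⟩
    · have := h1 (k + 1) (by omega) (by omega); rwa [hps k] at this
    · rw [← hps m]; exact h2
    · have hps' := hps (m - 1)
      rw [hm'] at hps'
      rw [← hps']
      exact h3
  · rintro ⟨hEo, h1, h2, h3⟩
    refine ⟨fun k hk1 hk2 => ?_, ?_, ?_⟩
    · obtain ⟨k, rfl⟩ : ∃ k', k = k' + 1 := ⟨k - 1, by omega⟩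
      rw [hps]
      rcases Nat.eq_zero_or_pos k with rfl | hk0
      · rw [S_zero]; simpa using hEo
      · exact h1 k hk0 (by omega)
    · rw [hps]; exact h2
    · have hps' := hps (m - 1)
      rw [hm'] at hps'
      show i + S (extv (Fin.cons a v)) m = j
      rw [hps']
      exact h3

lemma key_recursion (hindep : ProbabilityTheory.iIndepFun U μ)
    (hmeas : ∀ ℓ, Measurable (U ℓ))
    (hdist : ∀ ℓ k, (μ {ω | U ℓ ω = k}).toReal = π k)
    (Mn : ℕ) {m : ℕ} (hm : 1 ≤ m) (i j : ℤ) :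
    μ {ω | tauPmEq U Mn i (m + 1) ω ∧ pos U i m ω = j}
      = ∑ k ∈ Finset.Icc (0 : ℤ) ((Mn : ℤ) - 1), ENNReal.ofReal (π (k - i)) *
          μ {ω | tauPmEq U Mn k m ω ∧ pos U k (m - 1) ω = j} := by
  classical
  have hLHS := meas_event hindep hmeas hdist Mn (show 1 ≤ m + 1 by omega) i j
  have hm1 : (m + 1) - 1 = m := rfl
  rw [hm1] at hLHS
  rw [hLHS]
  -- reindex the tsum over tuples via `Fin.cons`
  have hre := (Fin.consEquiv (fun _ : Fin (m + 1) => ℤ)).tsum_eq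
    (fun u : Fin (m + 1) → ℤ =>
      if Cw Mn i j (m + 1) (extv u) then ∏ ℓ : Fin (m + 1), ENNReal.ofReal (π (u ℓ)) else 0)
  rw [← hre, ENNReal.tsum_prod']
  -- simplify the inner expression
  have hterm : ∀ (a : ℤ) (v : Fin m → ℤ),
      (if Cw Mn i j (m + 1) (extv ((Fin.consEquiv (fun _ : Fin (m + 1) => ℤ)) (a, v)))
        then ∏ ℓ : Fin (m + 1),
          ENNReal.ofReal (π (((Fin.consEquiv (fun _ : Fin (m + 1) => ℤ)) (a, v)) ℓ)) else 0)
      = (if inEo Mn (i + a) then ENNReal.ofReal (π a) else 0) *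
        (if Cw Mn (i + a) j m (extv v) then ∏ ℓ : Fin m, ENNReal.ofReal (π (v ℓ)) else 0) := by
    intro a v
    have hconsEq : ((Fin.consEquiv (fun _ : Fin (m + 1) => ℤ)) (a, v)) = Fin.cons (α := fun _ => ℤ) a v := rfl
    rw [hconsEq]
    have hprod : ∏ ℓ : Fin (m + 1), ENNReal.ofReal (π (Fin.cons (α := fun _ => ℤ) a v ℓ))
        = ENNReal.ofReal (π a) * ∏ ℓ : Fin m, ENNReal.ofReal (π (v ℓ)) := by
      rw [Fin.prod_univ_succ]
      simp [Fin.cons_zero, Fin.cons_succ]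
    rw [Cw_cons hm v]
    by_cases h1 : inEo Mn (i + a) <;> by_cases h2 : Cw Mn (i + a) j m (extv v) <;>
      simp [h1, h2, hprod]
  simp only [hterm]
  -- pull out constants and recognize the inner sums
  have hinner : ∀ a : ℤ,
      (∑' v : Fin m → ℤ,
        (if inEo Mn (i + a) then ENNReal.ofReal (π a) else 0) *
        (if Cw Mn (i + a) j m (extv v) then ∏ ℓ : Fin m, ENNReal.ofReal (π (v ℓ)) else 0))
      = (if inEo Mn (i + a) then ENNReal.ofReal (π a) else 0) *
          μ {ω | tauPmEq U Mn (i + a) m ω ∧ pos U (i + a) (m - 1) ω = j} := by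
    intro a
    rw [ENNReal.tsum_mul_left, meas_event hindep hmeas hdist Mn hm (i + a) j]
  simp only [hinner]
  -- reindex `a ↦ i + a`
  set F : ℤ → ENNReal := fun k =>
    (if inEo Mn k then ENNReal.ofReal (π (k - i)) else 0) *
      μ {ω | tauPmEq U Mn k m ω ∧ pos U k (m - 1) ω = j} with hFdef
  have hFa : ∀ a : ℤ,
      (if inEo Mn (i + a) then ENNReal.ofReal (π a) else 0) *
        μ {ω | tauPmEq U Mn (i + a) m ω ∧ pos U (i + a) (m - 1) ω = j} = F (i + a) := by
    intro a
    simp only [hFdef, add_sub_cancel_left]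
  simp only [hFa]
  have := (Equiv.addLeft i).tsum_eq F
  have haddL : ∀ a : ℤ, (Equiv.addLeft i) a = i + a := fun a => rfl
  simp only [haddL] at this
  rw [this]
  rw [tsum_eq_sum (s := Finset.Icc (0 : ℤ) ((Mn : ℤ) - 1)) ?_]
  · refine Finset.sum_congr rfl fun k hk => ?_
    have : inEo Mn k := by
      rw [Finset.mem_Icc] at hk; exact ⟨hk.1, hk.2⟩
    simp only [hFdef, if_pos this]
  · intro k hk
    have : ¬ inEo Mn k := by
      rw [Finset.mem_Icc] at hk
      intro h; exact hk ⟨h.1, h.2⟩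
    simp only [hFdef, if_neg this, zero_mul]

end LRWalkAux

/-- **Linear system for the exit-time generating functions `H^±`** of the
`(L,R)`-random walk: for every `x ∈ (0,1)` and all `i, j ∈ {0,…,M−1}`,
`Σ_{k=0}^{M−1} (δ_{ik} − π_{k−i}·x)·H^±_{kj}(x) = δ_{ij}·ϖ_i`; equivalently
`H^±_{ij}(x) = δ_{ij}·ϖ_i + x·Σ_{k=0}^{M−1} π_{k−i}·H^±_{kj}(x)`. -/
theorem LRWalk.Hpm_linear_system
    (Ω : Type*) [MeasurableSpace Ω] (μ : MeasureTheory.Measure Ω)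
    [MeasureTheory.IsProbabilityMeasure μ]
    (L R : ℕ) (hL : 1 ≤ L) (hR : 1 ≤ R) (M : ℕ) (hM : M = max L R)
    (π : ℤ → ℝ) (hnn : ∀ k, 0 ≤ π k)
    (hsupp : ∀ k : ℤ, k < -(L : ℤ) ∨ (R : ℤ) < k → π k = 0)
    (hsum : ∑ k ∈ Finset.Icc (-(L : ℤ)) (R : ℤ), π k = 1)
    (U : ℕ → Ω → ℤ) (hmeas : ∀ ℓ, Measurable (U ℓ))
    (hindep : ProbabilityTheory.iIndepFun U μ)
    (hdist : ∀ ℓ k, (μ {ω | U ℓ ω = k}).toReal = π k)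
    (x : ℝ) (hx : x ∈ Set.Ioo (0 : ℝ) 1)
    (i j : ℤ) (hi0 : 0 ≤ i) (hiM : i ≤ (M : ℤ) - 1) (hj0 : 0 ≤ j) (hjM : j ≤ (M : ℤ) - 1) :
    (∑ k ∈ Finset.Icc (0 : ℤ) ((M : ℤ) - 1),
        ((if i = k then 1 else 0) - π (k - i) * x) * Hpm μ U M k j x
      = (if i = j then 1 else 0) * varpi μ U M i) ∧
    (Hpm μ U M i j x
      = (if i = j then 1 else 0) * varpi μ U M i
        + x * ∑ k ∈ Finset.Icc (0 : ℤ) ((M : ℤ) - 1), π (k - i) * Hpm μ U M k j x) := by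
  classical
  obtain ⟨hx0, hx1⟩ := hx
  -- the exit probabilities
  set q : ℕ → ℤ → ENNReal :=
    fun m k => μ {ω | tauPmEq U M k m ω ∧ pos U k (m - 1) ω = j} with hqdef
  have hq0 : ∀ k : ℤ, q 0 k = 0 := by
    intro k
    simp only [hqdef]
    have : {ω | tauPmEq U M k 0 ω ∧ pos U k (0 - 1) ω = j} = ∅ := by
      ext ω; simp [tauPmEq]
    rw [this, measure_empty]
  have hq1 : (q 1 i).toReal = (if i = j then 1 else 0) * varpi μ U M i := by
    simp only [hqdef]
    by_cases hij : i = j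
    · subst hij
      have hset : {ω | tauPmEq U M i 1 ω ∧ pos U i (1 - 1) ω = i}
          = {ω | ¬ inEo M (pos U i 1 ω)} := by
        ext ω
        simp only [Set.mem_setOf_eq, tauPmEq]
        constructor
        · rintro ⟨⟨_, _, h⟩, _⟩; exact h
        · intro h
          refine ⟨⟨le_rfl, fun k hk1 hk2 => absurd (lt_of_le_of_lt hk1 hk2) (by omega), h⟩, ?_⟩
          show pos U i 0 ω = i
          simp [pos]
      rw [if_pos rfl, one_mul, hset]; rfl
    · have hset : {ω | tauPmEq U M i 1 ω ∧ pos U i (1 - 1) ω = j} = ∅ := by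
        ext ω
        simp only [Set.mem_setOf_eq, Set.mem_empty_iff_false, iff_false, not_and]
        intro _
        show ¬ pos U i 0 ω = j
        simpa [pos] using hij
      rw [if_neg hij, zero_mul, hset, measure_empty]; rfl
  have hqle : ∀ m k, q m k ≤ 1 := fun m k => prob_le_one
  have hqfin : ∀ m k, q m k ≠ ⊤ := fun m k => (lt_of_le_of_lt (hqle m k) (by norm_num)).ne
  have hrec : ∀ {m : ℕ}, 1 ≤ m → ∀ k : ℤ,
      q (m + 1) k = ∑ k' ∈ Finset.Icc (0 : ℤ) ((M : ℤ) - 1),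
        ENNReal.ofReal (π (k' - k)) * q m k' := by
    intro m hm k
    simp only [hqdef]
    have h := LRWalkAux.key_recursion hindep hmeas hdist M hm k j
    have hm1 : (m + 1) - 1 = m := rfl
    rw [hm1]
    exact h
  -- the real coefficient sequences
  set f : ℤ → ℕ → ℝ := fun k m => (q m k).toReal * x ^ (m - 1) with hfdef
  have hH : ∀ k : ℤ, Hpm μ U M k j x = ∑' m : ℕ, f k m := fun k => rfl
  have hfnn : ∀ k m, 0 ≤ f k m := fun k m =>
    mul_nonneg ENNReal.toReal_nonneg (pow_nonneg hx0.le _)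
  have hfle : ∀ k m, f k m ≤ x⁻¹ * x ^ m := by
    intro k m
    have h1 : (q m k).toReal ≤ 1 := by
      have := ENNReal.toReal_mono (by norm_num) (hqle m k)
      simpa using this
    have h2 : f k m ≤ x ^ (m - 1) := by
      simp only [hfdef]
      calc (q m k).toReal * x ^ (m - 1) ≤ 1 * x ^ (m - 1) :=
            mul_le_mul_of_nonneg_right h1 (pow_nonneg hx0.le _)
        _ = x ^ (m - 1) := one_mul _
    refine h2.trans ?_
    rcases Nat.eq_zero_or_pos m with rfl | hm
    · simp only [Nat.zero_sub, pow_zero]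
      rw [mul_one]
      exact (one_le_inv₀ hx0).mpr hx1.le
    · obtain ⟨n, rfl⟩ : ∃ n, m = n + 1 := ⟨m - 1, by omega⟩
      rw [Nat.add_sub_cancel, pow_succ, ← mul_assoc, mul_comm x⁻¹ (x ^ n), mul_assoc,
        inv_mul_cancel₀ hx0.ne', mul_one]
  have hmaj : Summable (fun m : ℕ => x⁻¹ * x ^ m) :=
    (summable_geometric_of_lt_one hx0.le hx1).mul_left _
  have hfs : ∀ k, Summable (f k) := fun k =>
    Summable.of_nonneg_of_le (hfnn k) (hfle k) hmaj
  have hfshift : ∀ k, Summable (fun m => f k (m + 1)) := fun k =>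
    (summable_nat_add_iff 1).2 (hfs k)
  have hf0 : ∀ k, f k 0 = 0 := by
    intro k; simp only [hfdef]; simp [hq0 k]
  have htail : ∀ k, (∑' m : ℕ, f k (m + 1)) = Hpm μ U M k j x := by
    intro k
    rw [hH k, Summable.tsum_eq_zero_add (hfs k), hf0 k, zero_add]
  -- the second identity
  have hmain : Hpm μ U M i j x
      = (if i = j then 1 else 0) * varpi μ U M i
        + x * ∑ k ∈ Finset.Icc (0 : ℤ) ((M : ℤ) - 1), π (k - i) * Hpm μ U M k j x := by
    have step1 : Hpm μ U M i j x = f i 1 + ∑' m : ℕ, f i (m + 2) := by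
      rw [← htail i, Summable.tsum_eq_zero_add (hfshift i)]
    have hf1 : f i 1 = (if i = j then 1 else 0) * varpi μ U M i := by
      simp only [hfdef]; simp [hq1]
    have hf2 : ∀ m : ℕ, f i (m + 2)
        = ∑ k ∈ Finset.Icc (0 : ℤ) ((M : ℤ) - 1), (π (k - i) * x) * f k (m + 1) := by
      intro m
      have hq2 : q (m + 2) i = ∑ k ∈ Finset.Icc (0 : ℤ) ((M : ℤ) - 1),
          ENNReal.ofReal (π (k - i)) * q (m + 1) k := hrec (by omega) i
      have htr : (q (m + 2) i).toReal
          = ∑ k ∈ Finset.Icc (0 : ℤ) ((M : ℤ) - 1), π (k - i) * (q (m + 1) k).toReal := by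
        rw [hq2, ENNReal.toReal_sum (fun k _ =>
          ENNReal.mul_ne_top ENNReal.ofReal_ne_top (hqfin _ _))]
        refine Finset.sum_congr rfl fun k _ => ?_
        rw [ENNReal.toReal_mul, ENNReal.toReal_ofReal (hnn _)]
      simp only [hfdef]
      rw [htr, Finset.sum_mul]
      refine Finset.sum_congr rfl fun k _ => ?_
      have h1 : ((m + 2) - 1 : ℕ) = (m + 1 : ℕ) := rfl
      have h2 : ((m + 1) - 1 : ℕ) = (m : ℕ) := rfl
      rw [h1, h2, pow_succ]
      ring
    have hswap : (∑' m : ℕ, f i (m + 2))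
        = ∑ k ∈ Finset.Icc (0 : ℤ) ((M : ℤ) - 1),
            ∑' m : ℕ, (π (k - i) * x) * f k (m + 1) := by
      rw [← Summable.tsum_finsetSum (fun k _ => (hfshift k).mul_left _)]
      exact tsum_congr hf2
    rw [step1, hf1, hswap]
    congr 1
    rw [Finset.mul_sum]
    refine Finset.sum_congr rfl fun k _ => ?_
    rw [tsum_mul_left, htail k]
    ring
  refine ⟨?_, hmain⟩
  -- the first identity follows algebraically
  have himem : i ∈ Finset.Icc (0 : ℤ) ((M : ℤ) - 1) := Finset.mem_Icc.mpr ⟨hi0, hiM⟩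
  have hsplit : ∑ k ∈ Finset.Icc (0 : ℤ) ((M : ℤ) - 1),
      ((if i = k then 1 else 0) - π (k - i) * x) * Hpm μ U M k j x
      = Hpm μ U M i j x
        - x * ∑ k ∈ Finset.Icc (0 : ℤ) ((M : ℤ) - 1), π (k - i) * Hpm μ U M k j x := by
    have h1 : ∀ k ∈ Finset.Icc (0 : ℤ) ((M : ℤ) - 1),
        ((if i = k then 1 else 0) - π (k - i) * x) * Hpm μ U M k j x
        = (if i = k then Hpm μ U M k j x else 0) - x * (π (k - i) * Hpm μ U M k j x) := by
      intro k _
      by_cases h : i = k <;> simp [h] <;> ring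
    rw [Finset.sum_congr rfl h1, Finset.sum_sub_distrib, Finset.sum_ite_eq, if_pos himem,
      ← Finset.mul_sum]
  rw [hsplit, hmain]
  ring
end
end

section
/- For the (L,R)-random walk with sojourn time T_n in ℤ^† = {0,1,2,…}, for every x, y ∈ (0,1) and every i ∈ {0,…,M−1}: K_i(x,0) = G_i(x) − Σ_{j=0}^{M−1} H°_{i+M, j}(x) · G_{j−M}(x), and K_i(0,y) = G_i(y) − y·Σ_{j=0}^{2M−1} π_{j−i} G_j(y) − y·Σ_{j=0}^{M−1} Σ_{k=−M}^{−1} π_{k−i} H°_{kj}(y) · G_j(y). -/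
open MeasureTheory ProbabilityTheory
open scoped Classical

noncomputable section

namespace LRWalk

variable {Ω : Type*} [MeasurableSpace Ω]

/-- Sojourn time `T_n = #{m ∈ {1,…,n} : X_m ≥ 0}` of the walk started at `i`. -/
def T (U : ℕ → Ω → ℤ) (i : ℤ) (n : ℕ) (ω : Ω) : ℕ :=
  ((Finset.Icc 1 n).filter (fun m => 0 ≤ pos U i m ω)).card

/-- `G_i(x) = Σ_{m ≥ 0} P_i(X_m ∈ F)·x^m`. -/
def Gset (μ : Measure Ω) (U : ℕ → Ω → ℤ) (F : Set ℤ) (i : ℤ) (x : ℝ) : ℝ :=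
  ∑' m : ℕ, (μ {ω | pos U i m ω ∈ F}).toReal * x ^ m

/-- `K_i(x,0) = Σ_{n ≥ 0} P_i(T_n = n, X_n ∈ F)·x^n`. -/
def Kx0 (μ : Measure Ω) (U : ℕ → Ω → ℤ) (F : Set ℤ) (i : ℤ) (x : ℝ) : ℝ :=
  ∑' n : ℕ, (μ {ω | T U i n ω = n ∧ pos U i n ω ∈ F}).toReal * x ^ n

/-- `K_i(0,y) = Σ_{n ≥ 0} P_i(T_n = 0, X_n ∈ F)·y^n`. -/
def K0y (μ : Measure Ω) (U : ℕ → Ω → ℤ) (F : Set ℤ) (i : ℤ) (y : ℝ) : ℝ :=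
  ∑' n : ℕ, (μ {ω | T U i n ω = 0 ∧ pos U i n ω ∈ F}).toReal * y ^ n

/-- `K_i(x,y) = Σ_{n ≥ 0} Σ_{m=0}^{n} P_i(T_n = m, X_n ∈ F)·x^m·y^{n−m}`. -/
def Kxy (μ : Measure Ω) (U : ℕ → Ω → ℤ) (F : Set ℤ) (i : ℤ) (x y : ℝ) : ℝ :=
  ∑' n : ℕ, ∑ m ∈ Finset.range (n + 1),
    (μ {ω | T U i n ω = m ∧ pos U i n ω ∈ F}).toReal * x ^ m * y ^ (n - m)
end LRWalk

namespace LRWalkAux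

variable {Ω : Type*} [MeasurableSpace Ω] {μ : Measure Ω} {U : ℕ → Ω → ℤ} {π : ℤ → ℝ}

/-- A set determined by the variables `U ℓ`, `ℓ ∈ s`, is measurable. -/
lemma meas_sat (hmeas : ∀ ℓ, Measurable (U ℓ)) (s : Finset ℕ) (E : Set Ω)
    (hE : ∀ ω ω', (∀ ℓ ∈ s, U ℓ ω = U ℓ ω') → ω ∈ E → ω' ∈ E) : MeasurableSet E := by
  classical
  have hfm : Measurable (fun ω (ℓ : ↥s) => U ℓ.1 ω) :=
    measurable_pi_lambda _ (fun ℓ => hmeas ℓ.1)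
  have hEeq : E = (fun ω (ℓ : ↥s) => U ℓ.1 ω) ⁻¹' ((fun ω (ℓ : ↥s) => U ℓ.1 ω) '' E) := by
    apply Set.Subset.antisymm (Set.subset_preimage_image _ E)
    rintro ω' ⟨ω, hω, hfe⟩
    exact hE ω ω' (fun ℓ hℓ => congrFun hfe ⟨ℓ, hℓ⟩) hω
  rw [hEeq]
  exact hfm ((Set.to_countable _).measurableSet)

/-- Factorization of the measure of intersection of events depending on disjoint
sets of coordinates. -/
lemma fact_mul (hindep : iIndepFun U μ)
    (hmeas : ∀ ℓ, Measurable (U ℓ))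
    (s t : Finset ℕ) (hst : Disjoint s t) (E₁ E₂ : Set Ω)
    (h₁ : ∀ ω ω', (∀ ℓ ∈ s, U ℓ ω = U ℓ ω') → ω ∈ E₁ → ω' ∈ E₁)
    (h₂ : ∀ ω ω', (∀ ℓ ∈ t, U ℓ ω = U ℓ ω') → ω ∈ E₂ → ω' ∈ E₂) :
    μ (E₁ ∩ E₂) = μ E₁ * μ E₂ := by
  classical
  have hE₁ : E₁ = (fun ω (ℓ : ↥s) => U ℓ.1 ω) ⁻¹' ((fun ω (ℓ : ↥s) => U ℓ.1 ω) '' E₁) := by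
    apply Set.Subset.antisymm (Set.subset_preimage_image _ E₁)
    rintro ω' ⟨ω, hω, hfe⟩
    exact h₁ ω ω' (fun ℓ hℓ => congrFun hfe ⟨ℓ, hℓ⟩) hω
  have hE₂ : E₂ = (fun ω (ℓ : ↥t) => U ℓ.1 ω) ⁻¹' ((fun ω (ℓ : ↥t) => U ℓ.1 ω) '' E₂) := by
    apply Set.Subset.antisymm (Set.subset_preimage_image _ E₂)
    rintro ω' ⟨ω, hω, hfe⟩
    exact h₂ ω ω' (fun ℓ hℓ => congrFun hfe ⟨ℓ, hℓ⟩) hω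
  have hI := hindep.indepFun_finset s t hst hmeas
  rw [hE₁, hE₂]
  exact hI.measure_inter_preimage_eq_mul _ _
    ((Set.to_countable _).measurableSet) ((Set.to_countable _).measurableSet)

/-- Cylinder probabilities. -/
lemma cyl (hindep : iIndepFun U μ)
    (hdist : ∀ ℓ k, μ {ω | U ℓ ω = k} = ENNReal.ofReal (π k))
    (s : Finset ℕ) (g : ℕ → ℕ) (hg : Set.InjOn g s) (w : ℕ → ℤ) :
    μ {ω | ∀ ℓ ∈ s, U (g ℓ) ω = w ℓ} = ∏ ℓ ∈ s, ENNReal.ofReal (π (w ℓ)) := by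
  classical
  set sets : ℕ → Set ℤ := fun ℓ' => {k | ∀ ℓ ∈ s, g ℓ = ℓ' → k = w ℓ} with hsets
  have hset_eq : {ω | ∀ ℓ ∈ s, U (g ℓ) ω = w ℓ} = ⋂ ℓ' ∈ s.image g, U ℓ' ⁻¹' sets ℓ' := by
    ext ω
    simp only [Set.mem_setOf_eq, Set.mem_iInter, Finset.mem_image, Set.mem_preimage]
    constructor
    · rintro h ℓ' ⟨ℓ, hℓ, rfl⟩ ℓ₂ hℓ₂ hgg
      rw [← hgg]; exact h ℓ₂ hℓ₂
    · intro h ℓ hℓ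
      exact h (g ℓ) ⟨ℓ, hℓ, rfl⟩ ℓ hℓ rfl
  have hmeassets : ∀ ℓ' ∈ s.image g, MeasurableSet (sets ℓ') :=
    fun ℓ' _ => (Set.to_countable _).measurableSet
  rw [hset_eq, hindep.measure_inter_preimage_eq_mul _ hmeassets,
    Finset.prod_image (fun a ha b hb hab => hg ha hb hab)]
  refine Finset.prod_congr rfl (fun ℓ hℓ => ?_)
  have hsingle : sets (g ℓ) = {w ℓ} := by
    ext k
    simp only [hsets, Set.mem_setOf_eq, Set.mem_singleton_iff]
    constructor
    · intro h; exact h ℓ hℓ rfl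
    · rintro rfl ℓ₂ hℓ₂ hgg
      rw [hg hℓ₂ hℓ hgg]
  rw [hsingle]
  exact hdist (g ℓ) (w ℓ)

/-- Master formula: the probability of an event depending on `(U (g ℓ))_{ℓ ∈ s}`
through a pattern predicate `P` does not depend on the injection `g`. -/
lemma master (hindep : iIndepFun U μ)
    (hmeas : ∀ ℓ, Measurable (U ℓ))
    (hdist : ∀ ℓ k, μ {ω | U ℓ ω = k} = ENNReal.ofReal (π k))
    (s : Finset ℕ) (g : ℕ → ℕ) (hg : Set.InjOn g s) (P : (ℕ → ℤ) → Prop) :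
    μ {ω | P (fun ℓ => if ℓ ∈ s then U (g ℓ) ω else 0)}
      = ∑' v : ↥s → ℤ, (if P (fun ℓ => if h : ℓ ∈ s then v ⟨ℓ, h⟩ else 0)
          then ∏ ℓ ∈ s, ENNReal.ofReal (π (if h : ℓ ∈ s then v ⟨ℓ, h⟩ else 0)) else 0) := by
  classical
  set ext : (↥s → ℤ) → (ℕ → ℤ) := fun v ℓ => if h : ℓ ∈ s then v ⟨ℓ, h⟩ else 0 with hext
  set pat : Ω → (↥s → ℤ) := fun ω ℓ => U (g ℓ.1) ω with hpat
  have key : ∀ ω, (fun ℓ => if ℓ ∈ s then U (g ℓ) ω else 0) = ext (pat ω) := by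
    intro ω; funext ℓ
    by_cases h : ℓ ∈ s <;> simp [hext, hpat, h]
  have hdecomp : {ω | P (fun ℓ => if ℓ ∈ s then U (g ℓ) ω else 0)}
      = ⋃ v : ↥s → ℤ, (if P (ext v) then pat ⁻¹' {v} else ∅) := by
    ext ω
    simp only [Set.mem_setOf_eq, Set.mem_iUnion]
    constructor
    · intro h
      refine ⟨pat ω, ?_⟩
      rw [if_pos (by rwa [key ω] at h)]
      exact rfl
    · rintro ⟨v, hv⟩
      by_cases hPv : P (ext v)
      · rw [if_pos hPv] at hv
        have : pat ω = v := hv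
        rw [key ω, this]; exact hPv
      · rw [if_neg hPv] at hv; exact absurd hv (Set.notMem_empty ω)
  have hpatm : Measurable pat := measurable_pi_lambda _ (fun ℓ => hmeas (g ℓ.1))
  rw [hdecomp, measure_iUnion ?_ ?_]
  · refine tsum_congr (fun v => ?_)
    by_cases hPv : P (ext v)
    · rw [if_pos hPv, if_pos hPv]
      have hcylset : pat ⁻¹' {v} = {ω | ∀ ℓ ∈ s, U (g ℓ) ω = ext v ℓ} := by
        ext ω
        simp only [Set.mem_preimage, Set.mem_singleton_iff, Set.mem_setOf_eq, funext_iff]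
        constructor
        · intro h ℓ hℓ
          have := h ⟨ℓ, hℓ⟩
          simp only [hext]
          rw [dif_pos hℓ]
          exact this
        · intro h ℓ
          have := h ℓ.1 ℓ.2
          simp only [hext] at this
          rw [dif_pos ℓ.2] at this
          exact this
      rw [hcylset, cyl hindep hdist s g hg (ext v)]
    · rw [if_neg hPv, if_neg hPv, measure_empty]
  · intro v w hvw
    dsimp only [Function.onFun]
    refine Set.disjoint_left.2 (fun ω h1 h2 => ?_)
    by_cases hPv : P (ext v)
    · by_cases hPw : P (ext w)
      · rw [if_pos hPv] at h1; rw [if_pos hPw] at h2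
        exact hvw ((Set.mem_singleton_iff.1 h1).symm.trans (Set.mem_singleton_iff.1 h2))
      · rw [if_neg hPw] at h2; exact (Set.notMem_empty ω h2).elim
    · rw [if_neg hPv] at h1; exact (Set.notMem_empty ω h1).elim
  · intro v
    by_cases hPv : P (ext v)
    · rw [if_pos hPv]; exact hpatm (Set.to_countable _).measurableSet
    · rw [if_neg hPv]; exact MeasurableSet.empty

/-- Shift invariance. -/
lemma shift (hindep : iIndepFun U μ)
    (hmeas : ∀ ℓ, Measurable (U ℓ))
    (hdist : ∀ ℓ k, μ {ω | U ℓ ω = k} = ENNReal.ofReal (π k))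
    (s : Finset ℕ) (g₁ g₂ : ℕ → ℕ) (hg₁ : Set.InjOn g₁ s) (hg₂ : Set.InjOn g₂ s)
    (P : (ℕ → ℤ) → Prop) :
    μ {ω | P (fun ℓ => if ℓ ∈ s then U (g₁ ℓ) ω else 0)}
      = μ {ω | P (fun ℓ => if ℓ ∈ s then U (g₂ ℓ) ω else 0)} := by
  rw [master hindep hmeas hdist s g₁ hg₁ P, master hindep hmeas hdist s g₂ hg₂ P]

end LRWalkAux

namespace LRWalk

set_option linter.unusedSectionVars false
set_option linter.unusedVariables false

variable {Ω : Type*} [MeasurableSpace Ω] {μ : Measure Ω} {U : ℕ → Ω → ℤ} {π : ℤ → ℝ} {L R M : ℕ}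

lemma pos_zero (i : ℤ) (ω : Ω) : pos U i 0 ω = i := by
  simp [pos, Finset.Icc_eq_empty (by omega : ¬ (1:ℕ) ≤ 0)]

lemma pos_succ (i : ℤ) (m : ℕ) (ω : Ω) :
    pos U i (m + 1) ω = pos U i m ω + U (m + 1) ω := by
  unfold pos
  rw [← Finset.Ico_add_one_right_eq_Icc 1 (m+1), Finset.sum_Ico_succ_top (by omega), Finset.Ico_add_one_right_eq_Icc]
  ring

lemma pos_shift (i c : ℤ) (m : ℕ) (ω : Ω) : pos U (i + c) m ω = pos U i m ω + c := by
  unfold pos; ring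

lemma pos_congr {i : ℤ} {n m : ℕ} {ω ω' : Ω}
    (h : ∀ ℓ ∈ Finset.Icc 1 n, U ℓ ω = U ℓ ω') (hm : m ≤ n) :
    pos U i m ω = pos U i m ω' := by
  unfold pos
  congr 1
  refine Finset.sum_congr rfl (fun ℓ hℓ => ?_)
  refine h ℓ ?_
  simp only [Finset.mem_Icc] at hℓ ⊢
  omega

lemma pos_split {m n : ℕ} (hm : m ≤ n) (i : ℤ) (ω : Ω) :
    pos U i n ω = pos U i m ω + ∑ ℓ ∈ Finset.Icc (m+1) n, U ℓ ω := by
  unfold pos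
  rw [add_assoc]
  congr 1
  rw [← Finset.Ico_add_one_right_eq_Icc 1 n, ← Finset.Ico_add_one_right_eq_Icc 1 m, ← Finset.Ico_add_one_right_eq_Icc (m+1) n,
    ← Finset.sum_Ico_consecutive _ (by omega : 1 ≤ m + 1) (by omega : m + 1 ≤ n + 1)]

lemma T_eq_n_iff (i : ℤ) (n : ℕ) (ω : Ω) :
    T U i n ω = n ↔ ∀ m ∈ Finset.Icc 1 n, 0 ≤ pos U i m ω := by
  constructor
  · intro h m hm
    have hcard : ((Finset.Icc 1 n).filter (fun m => 0 ≤ pos U i m ω)).card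
        = (Finset.Icc 1 n).card := by
      unfold T at h
      rw [h, Nat.card_Icc]
      omega
    have := Finset.eq_of_subset_of_card_le (Finset.filter_subset _ _) (le_of_eq hcard.symm)
    rw [← this] at hm
    exact (Finset.mem_filter.1 hm).2
  · intro h
    unfold T
    rw [Finset.filter_true_of_mem h, Nat.card_Icc]
    omega

lemma T_eq_zero_iff (i : ℤ) (n : ℕ) (ω : Ω) :
    T U i n ω = 0 ↔ ∀ m ∈ Finset.Icc 1 n, pos U i m ω < 0 := by
  unfold T
  rw [Finset.card_eq_zero, Finset.filter_eq_empty_iff]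
  constructor
  · intro h m hm; have := h hm; omega
  · intro h m hm; have := h m hm; omega

lemma hdistE [IsProbabilityMeasure μ]
    (hdist : ∀ ℓ k, (μ {ω | U ℓ ω = k}).toReal = π k) (ℓ : ℕ) (k : ℤ) :
    μ {ω | U ℓ ω = k} = ENNReal.ofReal (π k) := by
  rw [← hdist ℓ k, ENNReal.ofReal_toReal (measure_ne_top μ _)]

lemma pat_sum (c m l : ℕ) (hl : l ≤ m) (ω : Ω) :
    ∑ ℓ ∈ Finset.Icc 1 l, (if ℓ ∈ Finset.Icc 1 m then U (ℓ + c) ω else 0)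
      = ∑ ℓ ∈ Finset.Icc (c+1) (c+l), U ℓ ω := by
  have h1 : ∑ ℓ ∈ Finset.Icc 1 l, (if ℓ ∈ Finset.Icc 1 m then U (ℓ + c) ω else 0)
      = ∑ ℓ ∈ Finset.Icc 1 l, U (ℓ + c) ω := by
    refine Finset.sum_congr rfl (fun ℓ hℓ => ?_)
    rw [if_pos]
    simp only [Finset.mem_Icc] at hℓ ⊢
    omega
  have h2 : Finset.Icc (c+1) (c+l) = (Finset.Icc 1 l).map (addRightEmbedding c) := by
    rw [Finset.map_add_right_Icc]
    congr 1 <;> omega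
  rw [h1, h2, Finset.sum_map]
  simp only [addRightEmbedding_apply]


lemma tauOEq_congr {n m : ℕ} {ω ω' : Ω} {a : ℤ}
    (h : ∀ ℓ ∈ Finset.Icc 1 n, U ℓ ω = U ℓ ω') (hm : m ≤ n) :
    tauOEq U M a m ω → tauOEq U M a m ω' := by
  rintro ⟨h1, h2, h3⟩
  refine ⟨h1, fun k hk1 hk2 => ?_, ?_⟩
  · rw [← pos_congr h (by omega : k ≤ n)]; exact h2 k hk1 hk2
  · rw [← pos_congr h hm]; exact h3

lemma measure_U_mem_Icc [IsProbabilityMeasure μ]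
    (hmeas : ∀ ℓ, Measurable (U ℓ))
    (hdist : ∀ ℓ k, (μ {ω | U ℓ ω = k}).toReal = π k)
    (hnn : ∀ k, 0 ≤ π k)
    (hsum : ∑ k ∈ Finset.Icc (-(L : ℤ)) (R : ℤ), π k = 1) (ℓ : ℕ) :
    μ {ω | -(L:ℤ) ≤ U ℓ ω ∧ U ℓ ω ≤ R} = 1 := by
  have hset : {ω | -(L:ℤ) ≤ U ℓ ω ∧ U ℓ ω ≤ R}
      = ⋃ k ∈ (Finset.Icc (-(L:ℤ)) (R:ℤ)), {ω | U ℓ ω = k} := by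
    ext ω
    simp only [Set.mem_setOf_eq, Set.mem_iUnion, Finset.mem_Icc]
    constructor
    · intro h; exact ⟨U ℓ ω, ⟨h.1, h.2⟩, rfl⟩
    · rintro ⟨k, ⟨h1, h2⟩, rfl⟩; exact ⟨h1, h2⟩
  have hm : ∀ k ∈ Finset.Icc (-(L:ℤ)) (R:ℤ), MeasurableSet {ω | U ℓ ω = k} :=
    fun k _ => (hmeas ℓ) (measurableSet_singleton k)
  have hd : Set.PairwiseDisjoint (↑(Finset.Icc (-(L:ℤ)) (R:ℤ)))
      (fun k => {ω | U ℓ ω = k}) := by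
    intro a ha b hb hab
    refine Set.disjoint_left.2 (fun ω h1 h2 => hab ?_)
    exact (h1 : U ℓ ω = a).symm.trans (h2 : U ℓ ω = b)
  rw [hset, measure_biUnion_finset hd hm]
  rw [Finset.sum_congr rfl (fun k _ => hdistE hdist ℓ k),
    ← ENNReal.ofReal_sum_of_nonneg (fun k _ => hnn k), hsum, ENNReal.ofReal_one]

lemma measure_good_inter [IsProbabilityMeasure μ]
    (hmeas : ∀ ℓ, Measurable (U ℓ))
    (hdist : ∀ ℓ k, (μ {ω | U ℓ ω = k}).toReal = π k)
    (hnn : ∀ k, 0 ≤ π k)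
    (hsum : ∑ k ∈ Finset.Icc (-(L : ℤ)) (R : ℤ), π k = 1) (n : ℕ) (A : Set Ω) :
    μ (A ∩ {ω | ∀ ℓ ∈ Finset.Icc 1 n, -(L:ℤ) ≤ U ℓ ω ∧ U ℓ ω ≤ R}) = μ A := by
  apply measure_inter_conull
  have hsub : {ω | ∀ ℓ ∈ Finset.Icc 1 n, -(L:ℤ) ≤ U ℓ ω ∧ U ℓ ω ≤ R}ᶜ
      ⊆ ⋃ ℓ ∈ (Finset.Icc 1 n : Finset ℕ), ({ω | -(L:ℤ) ≤ U ℓ ω ∧ U ℓ ω ≤ R}ᶜ : Set Ω) := by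
    intro ω hω
    simp only [Set.mem_compl_iff, Set.mem_setOf_eq, not_forall] at hω
    obtain ⟨ℓ, hℓ, hb⟩ := hω
    simp only [Set.mem_iUnion, Set.mem_compl_iff, Set.mem_setOf_eq]
    exact ⟨ℓ, hℓ, hb⟩
  refine measure_mono_null hsub (measure_biUnion_null_iff (Finset.Icc 1 n).countable_toSet |>.2
    (fun ℓ _ => ?_))
  have hms : MeasurableSet {ω | -(L:ℤ) ≤ U ℓ ω ∧ U ℓ ω ≤ R} := by
    have : {ω | -(L:ℤ) ≤ U ℓ ω ∧ U ℓ ω ≤ R} = U ℓ ⁻¹' (Set.Icc (-(L:ℤ)) R) := rfl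
    rw [this]
    exact (hmeas ℓ) ((Set.to_countable _).measurableSet)
  rw [prob_compl_eq_zero_iff hms]
  exact measure_U_mem_Icc hmeas hdist hnn hsum ℓ

lemma shift_sum [IsProbabilityMeasure μ]
    (hindep : iIndepFun U μ)
    (hmeas : ∀ ℓ, Measurable (U ℓ))
    (hdist : ∀ ℓ k, (μ {ω | U ℓ ω = k}).toReal = π k)
    (c : ℤ) (m r : ℕ) (A : Set ℤ) :
    μ {ω | c + ∑ ℓ ∈ Finset.Icc (m+1) (m+r), U ℓ ω ∈ A}
      = μ {ω | c + ∑ ℓ ∈ Finset.Icc 1 r, U ℓ ω ∈ A} := by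
  have h1 : {ω | c + ∑ ℓ ∈ Finset.Icc (m+1) (m+r), U ℓ ω ∈ A}
      = {ω | (fun v : ℕ → ℤ => c + ∑ ℓ ∈ Finset.Icc 1 r, v ℓ ∈ A)
          (fun ℓ => if ℓ ∈ Finset.Icc 1 r then U (ℓ + m) ω else 0)} := by
    ext ω
    simp only [Set.mem_setOf_eq]
    rw [pat_sum m r r le_rfl ω]
  have h2 : {ω | c + ∑ ℓ ∈ Finset.Icc 1 r, U ℓ ω ∈ A}
      = {ω | (fun v : ℕ → ℤ => c + ∑ ℓ ∈ Finset.Icc 1 r, v ℓ ∈ A)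
          (fun ℓ => if ℓ ∈ Finset.Icc 1 r then U (ℓ + 0) ω else 0)} := by
    ext ω
    simp only [Set.mem_setOf_eq]
    rw [pat_sum 0 r r le_rfl ω]
    norm_num
  rw [h1, h2]
  exact LRWalkAux.shift hindep hmeas (hdistE hdist) (Finset.Icc 1 r) (· + m) (· + 0)
    (fun a _ b _ hab => Nat.add_right_cancel hab) (fun a _ b _ hab => Nat.add_right_cancel hab)
    (fun v : ℕ → ℤ => c + ∑ ℓ ∈ Finset.Icc 1 r, v ℓ ∈ A)

lemma tau_shift [IsProbabilityMeasure μ]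
    (hindep : iIndepFun U μ)
    (hmeas : ∀ ℓ, Measurable (U ℓ))
    (hdist : ∀ ℓ k, (μ {ω | U ℓ ω = k}).toReal = π k)
    (M : ℕ) (k j : ℤ) (m : ℕ) (hm : 1 ≤ m) :
    μ {ω | (∀ l, 1 ≤ l → l < m → ¬ inEo M (k + ∑ ℓ ∈ Finset.Icc 2 (l+1), U ℓ ω))
          ∧ inEo M (k + ∑ ℓ ∈ Finset.Icc 2 (m+1), U ℓ ω)
          ∧ k + ∑ ℓ ∈ Finset.Icc 2 (m+1), U ℓ ω = j}
      = μ {ω | tauOEq U M k m ω ∧ pos U k m ω = j} := by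
  set P : (ℕ → ℤ) → Prop := fun v =>
    (∀ l, 1 ≤ l → l < m → ¬ inEo M (k + ∑ ℓ ∈ Finset.Icc 1 l, v ℓ))
      ∧ inEo M (k + ∑ ℓ ∈ Finset.Icc 1 m, v ℓ)
      ∧ k + ∑ ℓ ∈ Finset.Icc 1 m, v ℓ = j with hP
  have hps : ∀ (c : ℕ) (ω : Ω) (l : ℕ), l ≤ m →
      (∑ ℓ ∈ Finset.Icc 1 l, (if ℓ ∈ Finset.Icc 1 m then U (ℓ + c) ω else 0))
        = ∑ ℓ ∈ Finset.Icc (c+1) (c+l), U ℓ ω := fun c ω l hl => pat_sum c m l hl ω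
  have h1 : {ω | (∀ l, 1 ≤ l → l < m → ¬ inEo M (k + ∑ ℓ ∈ Finset.Icc 2 (l+1), U ℓ ω))
          ∧ inEo M (k + ∑ ℓ ∈ Finset.Icc 2 (m+1), U ℓ ω)
          ∧ k + ∑ ℓ ∈ Finset.Icc 2 (m+1), U ℓ ω = j}
      = {ω | P (fun ℓ => if ℓ ∈ Finset.Icc 1 m then U (ℓ + 1) ω else 0)} := by
    ext ω
    have e : ∀ l : ℕ, l ≤ m →
        k + (∑ ℓ ∈ Finset.Icc 1 l, (if ℓ ∈ Finset.Icc 1 m then U (ℓ + 1) ω else 0))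
          = k + ∑ ℓ ∈ Finset.Icc 2 (l+1), U ℓ ω := by
      intro l hl
      rw [hps 1 ω l hl, show 1 + l = l + 1 by omega, show (1:ℕ) + 1 = 2 from rfl]
    simp only [Set.mem_setOf_eq, hP]
    constructor
    · rintro ⟨ha, hb, hc⟩
      exact ⟨fun l hl1 hl2 => by rw [e l (by omega)]; exact ha l hl1 hl2,
        by rw [e m le_rfl]; exact hb, by rw [e m le_rfl]; exact hc⟩
    · rintro ⟨ha, hb, hc⟩
      exact ⟨fun l hl1 hl2 => by rw [← e l (by omega)]; exact ha l hl1 hl2,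
        by rw [← e m le_rfl]; exact hb, by rw [← e m le_rfl]; exact hc⟩
  have h2 : {ω | tauOEq U M k m ω ∧ pos U k m ω = j}
      = {ω | P (fun ℓ => if ℓ ∈ Finset.Icc 1 m then U (ℓ + 0) ω else 0)} := by
    ext ω
    have e : ∀ l : ℕ, l ≤ m →
        k + (∑ ℓ ∈ Finset.Icc 1 l, (if ℓ ∈ Finset.Icc 1 m then U (ℓ + 0) ω else 0))
          = pos U k l ω := by
      intro l hl
      rw [hps 0 ω l hl, show (0:ℕ) + 1 = 1 from rfl, Nat.zero_add]
      rfl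
    simp only [Set.mem_setOf_eq, hP, tauOEq]
    constructor
    · rintro ⟨⟨_, ha, hb⟩, hc⟩
      exact ⟨fun l hl1 hl2 => by rw [e l (by omega)]; exact ha l hl1 hl2,
        by rw [e m le_rfl]; exact hb, by rw [e m le_rfl]; exact hc⟩
    · rintro ⟨ha, hb, hc⟩
      exact ⟨⟨hm, fun l hl1 hl2 => by rw [← e l (by omega)]; exact ha l hl1 hl2,
        by rw [← e m le_rfl]; exact hb⟩, by rw [← e m le_rfl]; exact hc⟩
  rw [h1, h2]
  exact LRWalkAux.shift hindep hmeas (hdistE hdist) (Finset.Icc 1 m) (· + 1) (· + 0)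
    (fun a _ b _ hab => Nat.add_right_cancel hab) (fun a _ b _ hab => Nat.add_right_cancel hab) P

lemma T_congr {i : ℤ} {n : ℕ} {ω ω' : Ω} (h : ∀ ℓ ∈ Finset.Icc 1 n, U ℓ ω = U ℓ ω') :
    T U i n ω = T U i n ω' := by
  unfold T
  congr 1
  apply Finset.filter_congr
  intro m hm
  rw [pos_congr h (Finset.mem_Icc.1 hm).2]

lemma perN1 [IsProbabilityMeasure μ] (hM : M = max L R)
    (hnn : ∀ k, 0 ≤ π k) (hsum : ∑ k ∈ Finset.Icc (-(L : ℤ)) (R : ℤ), π k = 1)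
    (hmeas : ∀ ℓ, Measurable (U ℓ))
    (hindep : iIndepFun U μ)
    (hdist : ∀ ℓ k, (μ {ω | U ℓ ω = k}).toReal = π k)
    (F : Set ℤ) (i : ℤ) (hi0 : 0 ≤ i) (hiM : i ≤ (M : ℤ) - 1) (n : ℕ) :
    μ {ω | pos U i n ω ∈ F}
      = μ {ω | T U i n ω = n ∧ pos U i n ω ∈ F}
        + ∑ j ∈ Finset.Icc (0 : ℤ) ((M : ℤ) - 1), ∑ m ∈ Finset.range (n + 1),
            μ {ω | tauOEq U M (i + (M:ℤ)) m ω ∧ pos U (i + (M:ℤ)) m ω = j}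
              * μ {ω | pos U (j - (M:ℤ)) (n - m) ω ∈ F} := by
  classical
  have hLM : (L : ℤ) ≤ (M : ℤ) := by
    have : L ≤ M := hM ▸ le_max_left L R
    exact_mod_cast this
  set G : Set Ω := {ω | ∀ ℓ ∈ Finset.Icc 1 n, -(L:ℤ) ≤ U ℓ ω ∧ U ℓ ω ≤ R} with hGdef
  set B : Set Ω := {ω | T U i n ω = n ∧ pos U i n ω ∈ F} with hB
  set Q : Finset (ℤ × ℕ) := Finset.Icc (0 : ℤ) ((M : ℤ) - 1) ×ˢ Finset.range (n + 1) with hQ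
  set C : ℤ × ℕ → Set Ω := fun p =>
    {ω | (tauOEq U M (i + (M:ℤ)) p.2 ω ∧ pos U (i + (M:ℤ)) p.2 ω = p.1)
      ∧ pos U i n ω ∈ F} with hC
  have msB : MeasurableSet B := by
    refine LRWalkAux.meas_sat hmeas (Finset.Icc 1 n) B ?_
    rintro ω ω' hagree ⟨h1, h2⟩
    refine ⟨by rw [← T_congr hagree]; exact h1, by rw [← pos_congr hagree le_rfl]; exact h2⟩
  have msC : ∀ p ∈ Q, MeasurableSet (C p) := by
    intro p hp
    have hpn : p.2 ≤ n := by
      simp only [hQ, Finset.mem_product, Finset.mem_range] at hp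
      omega
    refine LRWalkAux.meas_sat hmeas (Finset.Icc 1 n) (C p) ?_
    rintro ω ω' hagree ⟨⟨ht, he⟩, hf⟩
    exact ⟨⟨tauOEq_congr hagree hpn ht, by rw [← pos_congr hagree hpn]; exact he⟩,
      by rw [← pos_congr hagree le_rfl]; exact hf⟩
  have sub1 : B ∪ (⋃ p ∈ Q, C p) ⊆ {ω | pos U i n ω ∈ F} := by
    rintro ω (hω | hω)
    · exact hω.2
    · simp only [Set.mem_iUnion] at hω
      obtain ⟨p, _, hω⟩ := hω
      exact hω.2
  have sub2 : {ω | pos U i n ω ∈ F} ∩ G ⊆ B ∪ (⋃ p ∈ Q, C p) := by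
    rintro ω ⟨hF, hGω⟩
    by_cases hT : T U i n ω = n
    · exact Or.inl ⟨hT, hF⟩
    right
    have hnotall : ¬ ∀ m ∈ Finset.Icc 1 n, 0 ≤ pos U i m ω :=
      fun h => hT ((T_eq_n_iff i n ω).2 h)
    set s : Finset ℕ := (Finset.Icc 1 n).filter (fun m => pos U i m ω < 0) with hs
    have hsne : s.Nonempty := by
      by_contra hcon
      rw [Finset.not_nonempty_iff_eq_empty, Finset.filter_eq_empty_iff] at hcon
      exact hnotall (fun m hm => by have := hcon hm; omega)
    have hmm := Finset.mem_filter.1 (s.min'_mem hsne)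
    set σ := s.min' hsne with hσ
    obtain ⟨hσIcc, hσneg⟩ := hmm
    obtain ⟨hσ1, hσn⟩ := Finset.mem_Icc.1 hσIcc
    have hmin : ∀ k, 1 ≤ k → k < σ → 0 ≤ pos U i k ω := by
      intro k h1 h2
      by_contra hneg
      push_neg at hneg
      have hks : k ∈ s := Finset.mem_filter.2 ⟨Finset.mem_Icc.2 ⟨h1, by omega⟩, hneg⟩
      have := s.min'_le k hks
      omega
    have hprev : 0 ≤ pos U i (σ - 1) ω := by
      rcases Nat.eq_zero_or_pos (σ - 1) with h | h
      · rw [h, pos_zero]; exact hi0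
      · exact hmin (σ - 1) h (by omega)
    have hstep : pos U i σ ω = pos U i (σ - 1) ω + U σ ω := by
      have h := pos_succ (U := U) i (σ - 1) ω
      rw [show σ - 1 + 1 = σ by omega] at h
      exact h
    obtain ⟨hUlo, hUhi⟩ := hGω σ hσIcc
    have hge : -(M:ℤ) ≤ pos U i σ ω := by omega
    refine Set.mem_iUnion.2 ⟨(pos U i σ ω + M, σ), Set.mem_iUnion.2 ⟨?_, ?_⟩⟩
    · simp only [hQ, Finset.mem_product, Finset.mem_Icc, Finset.mem_range]
      exact ⟨⟨by omega, by omega⟩, by omega⟩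
    · show (tauOEq U M (i + (M:ℤ)) σ ω ∧ pos U (i + (M:ℤ)) σ ω = pos U i σ ω + M)
        ∧ pos U i n ω ∈ F
      refine ⟨⟨⟨hσ1, fun k hk1 hk2 => ?_, ?_⟩, ?_⟩, hF⟩
      · rw [pos_shift]
        rintro ⟨hc1, hc2⟩
        have := hmin k hk1 hk2
        omega
      · rw [pos_shift]
        exact ⟨by omega, by omega⟩
      · rw [pos_shift]
  have huse : μ {ω | pos U i n ω ∈ F} = μ (B ∪ ⋃ p ∈ Q, C p) := by
    refine le_antisymm ?_ (measure_mono sub1)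
    calc μ {ω | pos U i n ω ∈ F}
        = μ ({ω | pos U i n ω ∈ F} ∩ G) :=
          (measure_good_inter hmeas hdist hnn hsum n _).symm
      _ ≤ μ (B ∪ ⋃ p ∈ Q, C p) := measure_mono sub2
  have hdBC : Disjoint B (⋃ p ∈ Q, C p) := by
    refine Set.disjoint_left.2 (fun ω hB' hU' => ?_)
    simp only [Set.mem_iUnion] at hU'
    obtain ⟨p, hpQ, hpc⟩ := hU'
    have hpn : p.2 ≤ n := by
      simp only [hQ, Finset.mem_product, Finset.mem_range] at hpQ
      omega
    obtain ⟨⟨⟨hm1, _, hin⟩, _⟩, _⟩ := hpc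
    rw [pos_shift] at hin
    have h0 := (T_eq_n_iff i n ω).1 hB'.1 p.2 (Finset.mem_Icc.2 ⟨hm1, hpn⟩)
    obtain ⟨_, hin2⟩ := hin
    omega
  have hdCC : Set.PairwiseDisjoint (↑Q) C := by
    intro p hp q hq hpq
    refine Set.disjoint_left.2 (fun ω h1 h2 => hpq ?_)
    obtain ⟨⟨⟨hp1, hp2, hp3⟩, hp4⟩, _⟩ := h1
    obtain ⟨⟨⟨hq1, hq2, hq3⟩, hq4⟩, _⟩ := h2
    rcases Nat.lt_trichotomy p.2 q.2 with hlt | heq | hlt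
    · exact absurd hp3 (hq2 p.2 hp1 hlt)
    · have h1' : p.1 = q.1 := by rw [← hp4, ← hq4, heq]
      exact Prod.ext h1' heq
    · exact absurd hq3 (hp2 q.2 hq1 hlt)
  have hadd : μ (B ∪ ⋃ p ∈ Q, C p) = μ B + ∑ p ∈ Q, μ (C p) := by
    rw [measure_union hdBC (Q.measurableSet_biUnion msC), measure_biUnion_finset hdCC msC]
  have hfac : ∀ p ∈ Q, μ (C p)
      = μ {ω | tauOEq U M (i + (M:ℤ)) p.2 ω ∧ pos U (i + (M:ℤ)) p.2 ω = p.1}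
        * μ {ω | pos U (p.1 - (M:ℤ)) (n - p.2) ω ∈ F} := by
    intro p hp
    have hpn : p.2 ≤ n := by
      simp only [hQ, Finset.mem_product, Finset.mem_range] at hp
      omega
    have hCD : C p = {ω | tauOEq U M (i + (M:ℤ)) p.2 ω ∧ pos U (i + (M:ℤ)) p.2 ω = p.1}
        ∩ {ω | (p.1 - (M:ℤ)) + ∑ ℓ ∈ Finset.Icc (p.2 + 1) n, U ℓ ω ∈ F} := by
      ext ω
      simp only [hC, Set.mem_setOf_eq, Set.mem_inter_iff]
      constructor
      · rintro ⟨⟨ht, he⟩, hf⟩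
        refine ⟨⟨ht, he⟩, ?_⟩
        have hsplit := pos_split (U := U) hpn i ω
        have hval : pos U i p.2 ω = p.1 - (M:ℤ) := by
          have := pos_shift (U := U) i (M:ℤ) p.2 ω
          omega
        rw [hsplit, hval] at hf
        exact hf
      · rintro ⟨⟨ht, he⟩, hf⟩
        refine ⟨⟨ht, he⟩, ?_⟩
        have hsplit := pos_split (U := U) hpn i ω
        have hval : pos U i p.2 ω = p.1 - (M:ℤ) := by
          have := pos_shift (U := U) i (M:ℤ) p.2 ω
          omega
        rw [hsplit, hval]
        exact hf
    rw [hCD, LRWalkAux.fact_mul hindep hmeas (Finset.Icc 1 p.2) (Finset.Icc (p.2+1) n) ?_ _ _ ?_ ?_]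
    · congr 1
      have hsh := shift_sum hindep hmeas hdist (p.1 - (M:ℤ)) p.2 (n - p.2) F
      rw [show p.2 + (n - p.2) = n by omega] at hsh
      rw [hsh]
      rfl
    · rw [Finset.disjoint_left]
      intro a ha hb
      simp only [Finset.mem_Icc] at ha hb
      omega
    · rintro ω ω' hagree ⟨ht, he⟩
      exact ⟨tauOEq_congr hagree le_rfl ht, by rw [← pos_congr hagree le_rfl]; exact he⟩
    · intro ω ω' hagree h
      simp only [Set.mem_setOf_eq] at h ⊢
      rw [← Finset.sum_congr rfl hagree]
      exact h
  rw [huse, hadd, Finset.sum_congr rfl hfac, hQ, Finset.sum_product]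

lemma perN2 [IsProbabilityMeasure μ] (hM : M = max L R)
    (hnn : ∀ k, 0 ≤ π k) (hsum : ∑ k ∈ Finset.Icc (-(L : ℤ)) (R : ℤ), π k = 1)
    (hmeas : ∀ ℓ, Measurable (U ℓ))
    (hindep : iIndepFun U μ)
    (hdist : ∀ ℓ k, (μ {ω | U ℓ ω = k}).toReal = π k)
    (F : Set ℤ) (i : ℤ) (hi0 : 0 ≤ i) (hiM : i ≤ (M : ℤ) - 1) (n : ℕ) :
    μ {ω | pos U i (n+1) ω ∈ F}
      = μ {ω | T U i (n+1) ω = 0 ∧ pos U i (n+1) ω ∈ F}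
        + ∑ j ∈ Finset.Icc (0 : ℤ) (2 * (M : ℤ) - 1),
            ENNReal.ofReal (π (j - i)) * μ {ω | pos U j n ω ∈ F}
        + ∑ j ∈ Finset.Icc (0 : ℤ) ((M : ℤ) - 1), ∑ k ∈ Finset.Icc (-(M:ℤ)) (-1),
            ENNReal.ofReal (π (k - i)) * ∑ m ∈ Finset.range (n + 1),
              μ {ω | tauOEq U M k m ω ∧ pos U k m ω = j}
                * μ {ω | pos U j (n - m) ω ∈ F} := by
  classical
  have hLM : (L : ℤ) ≤ (M : ℤ) := by
    have : L ≤ M := hM ▸ le_max_left L R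
    exact_mod_cast this
  have hRM : (R : ℤ) ≤ (M : ℤ) := by
    have : R ≤ M := hM ▸ le_max_right L R
    exact_mod_cast this
  set G : Set Ω := {ω | ∀ ℓ ∈ Finset.Icc 1 (n+1), -(L:ℤ) ≤ U ℓ ω ∧ U ℓ ω ≤ R} with hGdef
  set B : Set Ω := {ω | T U i (n+1) ω = 0 ∧ pos U i (n+1) ω ∈ F} with hB
  set JA : Finset ℤ := Finset.Icc (0 : ℤ) (2 * (M : ℤ) - 1) with hJA
  set PA : ℤ → Set Ω := fun j => {ω | pos U i 1 ω = j ∧ pos U i (n+1) ω ∈ F} with hPA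
  set Q : Finset (ℤ × ℤ × ℕ) := Finset.Icc (0 : ℤ) ((M : ℤ) - 1)
      ×ˢ (Finset.Icc (-(M:ℤ)) (-1) ×ˢ Finset.Icc 1 n) with hQdef
  set PB : ℤ × ℤ × ℕ → Set Ω := fun p =>
    {ω | pos U i 1 ω = p.2.1
      ∧ (∀ l, 1 ≤ l → l < p.2.2 → ¬ inEo M (pos U i (l+1) ω))
      ∧ inEo M (pos U i (p.2.2+1) ω) ∧ pos U i (p.2.2+1) ω = p.1
      ∧ pos U i (n+1) ω ∈ F} with hPB
  have msB : MeasurableSet B := by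
    refine LRWalkAux.meas_sat hmeas (Finset.Icc 1 (n+1)) B ?_
    rintro ω ω' hagree ⟨h1, h2⟩
    exact ⟨by rw [← T_congr hagree]; exact h1, by rw [← pos_congr hagree le_rfl]; exact h2⟩
  have msA : ∀ j ∈ JA, MeasurableSet (PA j) := by
    intro j _
    refine LRWalkAux.meas_sat hmeas (Finset.Icc 1 (n+1)) (PA j) ?_
    rintro ω ω' hagree ⟨h1, h2⟩
    exact ⟨by rw [← pos_congr hagree (by omega)]; exact h1,
      by rw [← pos_congr hagree le_rfl]; exact h2⟩
  have msPB : ∀ p ∈ Q, MeasurableSet (PB p) := by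
    intro p hp
    have hpn : p.2.2 ≤ n := by
      simp only [hQdef, Finset.mem_product, Finset.mem_Icc] at hp
      omega
    refine LRWalkAux.meas_sat hmeas (Finset.Icc 1 (n+1)) (PB p) ?_
    rintro ω ω' hagree ⟨h1, h2, h3, h4, h5⟩
    refine ⟨by rw [← pos_congr hagree (by omega)]; exact h1,
      fun l hl1 hl2 => ?_, ?_, ?_, ?_⟩
    · rw [← pos_congr hagree (by omega : l + 1 ≤ n + 1)]
      exact h2 l hl1 hl2
    · rw [← pos_congr hagree (by omega : p.2.2 + 1 ≤ n + 1)]; exact h3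
    · rw [← pos_congr hagree (by omega : p.2.2 + 1 ≤ n + 1)]; exact h4
    · rw [← pos_congr hagree le_rfl]; exact h5
  have sub1 : B ∪ ((⋃ j ∈ JA, PA j) ∪ ⋃ p ∈ Q, PB p) ⊆ {ω | pos U i (n+1) ω ∈ F} := by
    rintro ω (hω | hω | hω)
    · exact hω.2
    · simp only [Set.mem_iUnion] at hω
      obtain ⟨j, _, hω⟩ := hω
      exact hω.2
    · simp only [Set.mem_iUnion] at hω
      obtain ⟨p, _, hω⟩ := hω
      exact hω.2.2.2.2
  have sub2 : {ω | pos U i (n+1) ω ∈ F} ∩ G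
      ⊆ B ∪ ((⋃ j ∈ JA, PA j) ∪ ⋃ p ∈ Q, PB p) := by
    rintro ω ⟨hF, hGω⟩
    by_cases hT : T U i (n+1) ω = 0
    · exact Or.inl ⟨hT, hF⟩
    right
    have hex : ¬ ∀ m ∈ Finset.Icc 1 (n+1), pos U i m ω < 0 :=
      fun h => hT ((T_eq_zero_iff i (n+1) ω).2 h)
    set s : Finset ℕ := (Finset.Icc 1 (n+1)).filter (fun m => 0 ≤ pos U i m ω) with hs
    have hsne : s.Nonempty := by
      by_contra hcon
      rw [Finset.not_nonempty_iff_eq_empty, Finset.filter_eq_empty_iff] at hcon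
      exact hex (fun m hm => by have := hcon hm; omega)
    have hmm := Finset.mem_filter.1 (s.min'_mem hsne)
    set σ := s.min' hsne with hσ
    obtain ⟨hσIcc, hσpos⟩ := hmm
    obtain ⟨hσ1, hσn⟩ := Finset.mem_Icc.1 hσIcc
    have hmin : ∀ k, 1 ≤ k → k < σ → pos U i k ω < 0 := by
      intro k h1 h2
      by_contra hge
      push_neg at hge
      have hks : k ∈ s := Finset.mem_filter.2 ⟨Finset.mem_Icc.2 ⟨h1, by omega⟩, hge⟩
      have := s.min'_le k hks
      omega
    have hp1 : pos U i 1 ω = i + U 1 ω := by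
      rw [show (1:ℕ) = 0 + 1 from rfl, pos_succ, pos_zero]
    obtain ⟨hU1lo, hU1hi⟩ := hGω 1 (Finset.mem_Icc.2 ⟨le_rfl, by omega⟩)
    rcases Nat.eq_or_lt_of_le hσ1 with h1 | h2
    · left
      have hσeq : pos U i 1 ω = pos U i σ ω := by rw [← h1]
      refine Set.mem_iUnion.2 ⟨pos U i 1 ω, Set.mem_iUnion.2 ⟨?_, rfl, hF⟩⟩
      simp only [hJA, Finset.mem_Icc]
      constructor
      · rw [hσeq]; exact hσpos
      · omega
    · right
      set m := σ - 1 with hmdef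
      have hm1 : 1 ≤ m := by omega
      have hmn : m ≤ n := by omega
      have hσm : m + 1 = σ := by omega
      have hstep : pos U i σ ω = pos U i m ω + U σ ω := by
        have h := pos_succ (U := U) i m ω
        rw [hσm] at h
        exact h
      have hmneg : pos U i m ω < 0 := hmin m hm1 (by omega)
      obtain ⟨hUσlo, hUσhi⟩ := hGω σ hσIcc
      have hk1 : pos U i 1 ω < 0 := hmin 1 le_rfl h2
      refine Set.mem_iUnion.2 ⟨(pos U i σ ω, pos U i 1 ω, m), Set.mem_iUnion.2 ⟨?_, ?_⟩⟩
      · simp only [hQdef, Finset.mem_product, Finset.mem_Icc]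
        exact ⟨⟨hσpos, by omega⟩, ⟨by omega, by omega⟩, hm1, hmn⟩
      · show pos U i 1 ω = pos U i 1 ω
          ∧ (∀ l, 1 ≤ l → l < m → ¬ inEo M (pos U i (l+1) ω))
          ∧ inEo M (pos U i (m+1) ω) ∧ pos U i (m+1) ω = pos U i σ ω
          ∧ pos U i (n+1) ω ∈ F
        refine ⟨rfl, fun l hl1 hl2 => ?_, ?_, by rw [hσm], hF⟩
        · rintro ⟨hc1, _⟩
          have := hmin (l+1) (by omega) (by omega)
          omega
        · rw [hσm]
          exact ⟨hσpos, by omega⟩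
  have huse : μ {ω | pos U i (n+1) ω ∈ F}
      = μ (B ∪ ((⋃ j ∈ JA, PA j) ∪ ⋃ p ∈ Q, PB p)) := by
    refine le_antisymm ?_ (measure_mono sub1)
    calc μ {ω | pos U i (n+1) ω ∈ F}
        = μ ({ω | pos U i (n+1) ω ∈ F} ∩ G) :=
          (measure_good_inter hmeas hdist hnn hsum (n+1) _).symm
      _ ≤ _ := measure_mono sub2
  -- disjointness
  have hBall : ∀ ω, ω ∈ B → ∀ m ∈ Finset.Icc 1 (n+1), pos U i m ω < 0 :=
    fun ω hω => (T_eq_zero_iff i (n+1) ω).1 hω.1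
  have hdB : Disjoint B ((⋃ j ∈ JA, PA j) ∪ ⋃ p ∈ Q, PB p) := by
    refine Set.disjoint_left.2 (fun ω hB' hU' => ?_)
    rcases hU' with hU' | hU'
    · simp only [Set.mem_iUnion] at hU'
      obtain ⟨j, hjJA, hj1, _⟩ := hU'
      have hjpos : (0:ℤ) ≤ j := by
        simp only [hJA, Finset.mem_Icc] at hjJA
        exact hjJA.1
      have := hBall ω hB' 1 (Finset.mem_Icc.2 ⟨le_rfl, by omega⟩)
      omega
    · simp only [Set.mem_iUnion] at hU'
      obtain ⟨p, hpQ, hpc⟩ := hU'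
      have hpn : p.2.2 ≤ n := by
        simp only [hQdef, Finset.mem_product, Finset.mem_Icc] at hpQ
        omega
      obtain ⟨_, _, ⟨hin1, _⟩, _, _⟩ := hpc
      have := hBall ω hB' (p.2.2+1) (Finset.mem_Icc.2 ⟨by omega, by omega⟩)
      omega
  have hdAC : Disjoint (⋃ j ∈ JA, PA j) (⋃ p ∈ Q, PB p) := by
    refine Set.disjoint_left.2 (fun ω h1 h2 => ?_)
    simp only [Set.mem_iUnion] at h1 h2
    obtain ⟨j, hjJA, hj1, _⟩ := h1
    obtain ⟨p, hpQ, hp1, _⟩ := h2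
    have hjpos : (0:ℤ) ≤ j := by
      simp only [hJA, Finset.mem_Icc] at hjJA
      exact hjJA.1
    have hkneg : p.2.1 ≤ -1 := by
      simp only [hQdef, Finset.mem_product, Finset.mem_Icc] at hpQ
      exact hpQ.2.1.2
    omega
  have hdAA : Set.PairwiseDisjoint (↑JA) PA := by
    intro a _ b _ hab
    refine Set.disjoint_left.2 (fun ω h1 h2 => hab ?_)
    exact h1.1.symm.trans h2.1
  have hdBB : Set.PairwiseDisjoint (↑Q) PB := by
    intro p hp q hq hpq
    refine Set.disjoint_left.2 (fun ω h1 h2 => hpq ?_)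
    obtain ⟨hp1, hp2, hp3, hp4, _⟩ := h1
    obtain ⟨hq1, hq2, hq3, hq4, _⟩ := h2
    have hp' := Finset.mem_coe.1 hp
    have hq' := Finset.mem_coe.1 hq
    simp only [hQdef, Finset.mem_product, Finset.mem_Icc] at hp' hq'
    have hkk : p.2.1 = q.2.1 := hp1.symm.trans hq1
    rcases Nat.lt_trichotomy p.2.2 q.2.2 with hlt | heq | hlt
    · exact absurd hp3 (hq2 p.2.2 (by omega) hlt)
    · have hjj : p.1 = q.1 := by
        rw [← hp4, ← hq4, heq]
      have h22 : p.2 = q.2 := Prod.ext hkk heq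
      exact Prod.ext hjj h22
    · exact absurd hq3 (hp2 q.2.2 (by omega) hlt)
  have hadd : μ (B ∪ ((⋃ j ∈ JA, PA j) ∪ ⋃ p ∈ Q, PB p))
      = μ B + (∑ j ∈ JA, μ (PA j) + ∑ p ∈ Q, μ (PB p)) := by
    rw [measure_union hdB ((JA.measurableSet_biUnion msA).union
        (Q.measurableSet_biUnion msPB)),
      measure_union hdAC (Q.measurableSet_biUnion msPB),
      measure_biUnion_finset hdAA msA, measure_biUnion_finset hdBB msPB]
  -- factorization: PA pieces
  have hfacA : ∀ j ∈ JA, μ (PA j)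
      = ENNReal.ofReal (π (j - i)) * μ {ω | pos U j n ω ∈ F} := by
    intro j _
    have hPAeq : PA j = {ω | U 1 ω = j - i}
        ∩ {ω | j + ∑ ℓ ∈ Finset.Icc 2 (n+1), U ℓ ω ∈ F} := by
      ext ω
      have hp1 : pos U i 1 ω = i + U 1 ω := by
        rw [show (1:ℕ) = 0 + 1 from rfl, pos_succ, pos_zero]
      have hsplit := pos_split (U := U) (show 1 ≤ n+1 by omega) i ω
      simp only [hPA, Set.mem_setOf_eq, Set.mem_inter_iff]
      constructor
      · rintro ⟨h1, h2⟩
        refine ⟨by omega, ?_⟩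
        rw [hsplit, h1] at h2
        exact h2
      · rintro ⟨h1, h2⟩
        have h1' : pos U i 1 ω = j := by omega
        refine ⟨h1', ?_⟩
        rw [hsplit, h1']
        exact h2
    rw [hPAeq, LRWalkAux.fact_mul hindep hmeas {1} (Finset.Icc 2 (n+1)) ?_ _ _ ?_ ?_]
    · rw [show {ω | U 1 ω = j - i} = {ω | U 1 ω = j - i} from rfl, hdistE hdist 1 (j - i)]
      congr 1
      have hsh := shift_sum hindep hmeas hdist j 1 n F
      rw [show 1 + n = n + 1 by omega] at hsh
      rw [hsh]
      rfl
    · rw [Finset.disjoint_left]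
      intro a ha hb
      simp only [Finset.mem_singleton] at ha
      simp only [Finset.mem_Icc] at hb
      omega
    · intro ω ω' hagree h
      have := hagree 1 (Finset.mem_singleton_self 1)
      simp only [Set.mem_setOf_eq] at h ⊢
      omega
    · intro ω ω' hagree h
      simp only [Set.mem_setOf_eq] at h ⊢
      rw [← Finset.sum_congr rfl hagree]
      exact h
  -- factorization: PB pieces
  have hfacB : ∀ p ∈ Q, μ (PB p)
      = ENNReal.ofReal (π (p.2.1 - i))
        * (μ {ω | tauOEq U M p.2.1 p.2.2 ω ∧ pos U p.2.1 p.2.2 ω = p.1}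
          * μ {ω | pos U p.1 (n - p.2.2) ω ∈ F}) := by
    intro p hp
    obtain ⟨j, k, m⟩ := p
    simp only [hQdef, Finset.mem_product, Finset.mem_Icc] at hp
    obtain ⟨⟨hj0, hjM⟩, ⟨hkM, hk1⟩, hm1, hmn⟩ := hp
    set C2 : Set Ω := {ω | (∀ l, 1 ≤ l → l < m → ¬ inEo M (k + ∑ ℓ ∈ Finset.Icc 2 (l+1), U ℓ ω))
        ∧ inEo M (k + ∑ ℓ ∈ Finset.Icc 2 (m+1), U ℓ ω)
        ∧ k + ∑ ℓ ∈ Finset.Icc 2 (m+1), U ℓ ω = j} with hC2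
    set D2 : Set Ω := {ω | j + ∑ ℓ ∈ Finset.Icc (m+2) (n+1), U ℓ ω ∈ F} with hD2
    have hPBeq : PB (j, k, m) = {ω | U 1 ω = k - i} ∩ (C2 ∩ D2) := by
      ext ω
      have hp1 : pos U i 1 ω = i + U 1 ω := by
        rw [show (1:ℕ) = 0 + 1 from rfl, pos_succ, pos_zero]
      have hsp : ∀ l : ℕ, 1 ≤ l →
          pos U i l ω = pos U i 1 ω + ∑ ℓ ∈ Finset.Icc 2 l, U ℓ ω := by
        intro l hl
        have := pos_split (U := U) hl i ω
        rwa [show (1:ℕ) + 1 = 2 from rfl] at this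
      have hsp2 := pos_split (U := U) (show m+1 ≤ n+1 by omega) i ω
      simp only [hPB, hC2, hD2, Set.mem_setOf_eq, Set.mem_inter_iff]
      constructor
      · rintro ⟨h1, h2, h3, h4, h5⟩
        have hU1 : U 1 ω = k - i := by omega
        refine ⟨hU1, ⟨fun l hl1 hl2 => ?_, ?_, ?_⟩, ?_⟩
        · have hh := h2 l hl1 hl2
          have hht := hsp (l+1) (by omega)
          rw [hht, h1] at hh
          exact hh
        · have := hsp (m+1) (by omega)
          rw [this, h1] at h3
          exact h3
        · have := hsp (m+1) (by omega)
          rw [this, h1] at h4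
          exact h4
        · have hj : pos U i (m+1) ω = j := h4
          rw [hsp2, hj, show m + 1 + 1 = m + 2 from rfl] at h5
          exact h5
      · rintro ⟨hU1, ⟨h2, h3, h4⟩, h5⟩
        have h1 : pos U i 1 ω = k := by omega
        have hposm : pos U i (m+1) ω = j := by
          rw [hsp (m+1) (by omega), h1]
          exact h4
        refine ⟨h1, fun l hl1 hl2 => ?_, ?_, hposm, ?_⟩
        · rw [hsp (l+1) (by omega), h1]
          exact h2 l hl1 hl2
        · rw [hsp (m+1) (by omega), h1]
          exact h3
        · rw [hsp2, hposm, show m + 1 + 1 = m + 2 from rfl]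
          exact h5
    have hsat2 : ∀ ω ω', (∀ ℓ ∈ Finset.Icc 2 (m+1), U ℓ ω = U ℓ ω') → ω ∈ C2 → ω' ∈ C2 := by
      rintro ω ω' hagree ⟨hc1, hc2, hc3⟩
      have he : ∀ l, l ≤ m →
          ∑ ℓ ∈ Finset.Icc 2 (l+1), U ℓ ω' = ∑ ℓ ∈ Finset.Icc 2 (l+1), U ℓ ω := by
        intro l hl
        refine Finset.sum_congr rfl (fun ℓ hℓ => ?_)
        refine (hagree ℓ ?_).symm
        simp only [Finset.mem_Icc] at hℓ ⊢
        omega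
      exact ⟨fun l hl1 hl2 => by rw [he l (by omega)]; exact hc1 l hl1 hl2,
        by rw [he m le_rfl]; exact hc2, by rw [he m le_rfl]; exact hc3⟩
    have hstep1 : μ (PB (j, k, m)) = μ {ω | U 1 ω = k - i} * μ (C2 ∩ D2) := by
      rw [hPBeq]
      refine LRWalkAux.fact_mul hindep hmeas {1} (Finset.Icc 2 (n+1)) ?_ _ _ ?_ ?_
      · rw [Finset.disjoint_left]
        intro a ha hb
        simp only [Finset.mem_singleton] at ha
        simp only [Finset.mem_Icc] at hb
        omega
      · intro ω ω' hagree h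
        have := hagree 1 (Finset.mem_singleton_self 1)
        simp only [Set.mem_setOf_eq] at h ⊢
        omega
      · rintro ω ω' hagree ⟨hc, hd⟩
        have hagree2 : ∀ ℓ ∈ Finset.Icc 2 (m+1), U ℓ ω = U ℓ ω' := by
          intro ℓ hℓ
          refine hagree ℓ ?_
          simp only [Finset.mem_Icc] at hℓ ⊢
          omega
        refine ⟨hsat2 ω ω' hagree2 hc, ?_⟩
        simp only [hD2, Set.mem_setOf_eq] at hd ⊢
        have he : ∑ ℓ ∈ Finset.Icc (m+2) (n+1), U ℓ ω' = ∑ ℓ ∈ Finset.Icc (m+2) (n+1), U ℓ ω := by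
          refine Finset.sum_congr rfl (fun ℓ hℓ => ?_)
          refine (hagree ℓ ?_).symm
          simp only [Finset.mem_Icc] at hℓ ⊢
          omega
        rw [he]
        exact hd
    have hstep2 : μ (C2 ∩ D2) = μ C2 * μ D2 := by
      refine LRWalkAux.fact_mul hindep hmeas (Finset.Icc 2 (m+1)) (Finset.Icc (m+2) (n+1)) ?_ _ _ hsat2 ?_
      · rw [Finset.disjoint_left]
        intro a ha hb
        simp only [Finset.mem_Icc] at ha hb
        omega
      · intro ω ω' hagree h
        simp only [hD2, Set.mem_setOf_eq] at h ⊢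
        rw [← Finset.sum_congr rfl hagree]
        exact h
    have hC2val : μ C2 = μ {ω | tauOEq U M k m ω ∧ pos U k m ω = j} :=
      tau_shift hindep hmeas hdist M k j m hm1
    have hD2val : μ D2 = μ {ω | pos U j (n - m) ω ∈ F} := by
      have hsh := shift_sum hindep hmeas hdist j (m+1) (n-m) F
      rw [show m + 1 + (n - m) = n + 1 by omega, show m + 1 + 1 = m + 2 from rfl] at hsh
      rw [hD2, hsh]
      rfl
    rw [hstep1, hstep2, hC2val, hD2val, hdistE hdist 1 (k - i)]
  -- zero pieces for m = 0
  have hzero : ∀ k j : ℤ, μ {ω | tauOEq U M k 0 ω ∧ pos U k 0 ω = j} = 0 := by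
    intro k j
    have : {ω : Ω | tauOEq U M k 0 ω ∧ pos U k 0 ω = j} = ∅ := by
      ext ω
      simp [tauOEq]
    rw [this, measure_empty]
  -- final assembly
  rw [huse, hadd, Finset.sum_congr rfl hfacA, Finset.sum_congr rfl hfacB]
  rw [hQdef, Finset.sum_product]
  rw [← add_assoc]
  congr 1
  refine Finset.sum_congr rfl (fun j _ => ?_)
  rw [Finset.sum_product]
  refine Finset.sum_congr rfl (fun k _ => ?_)
  dsimp only
  rw [← Finset.mul_sum]
  congr 1
  have hins : Finset.range (n+1) = insert 0 (Finset.Icc 1 n) := by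
    ext a
    simp only [Finset.mem_range, Finset.mem_insert, Finset.mem_Icc]
    omega
  rw [hins, Finset.sum_insert (by simp), hzero k j, zero_mul, zero_add]

lemma cauchy_helper {x : ℝ} (hx0 : 0 < x) (hx1 : x < 1) (a b : ℕ → ℝ)
    (ha0 : ∀ n, 0 ≤ a n) (ha1 : ∀ n, a n ≤ 1) (hb0 : ∀ n, 0 ≤ b n) (hb1 : ∀ n, b n ≤ 1) :
    Summable (fun n => (∑ m ∈ Finset.range (n+1), a m * b (n - m)) * x ^ n)
    ∧ (∑' n : ℕ, (∑ m ∈ Finset.range (n+1), a m * b (n - m)) * x ^ n)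
      = (∑' n : ℕ, a n * x ^ n) * (∑' n : ℕ, b n * x ^ n) := by
  have hxge : (0:ℝ) ≤ x := hx0.le
  have hsa : Summable (fun n => a n * x ^ n) :=
    Summable.of_nonneg_of_le (fun n => mul_nonneg (ha0 n) (pow_nonneg hxge n))
      (fun n => mul_le_of_le_one_left (pow_nonneg hxge n) (ha1 n))
      (summable_geometric_of_lt_one hxge hx1)
  have hsb : Summable (fun n => b n * x ^ n) :=
    Summable.of_nonneg_of_le (fun n => mul_nonneg (hb0 n) (pow_nonneg hxge n))
      (fun n => mul_le_of_le_one_left (pow_nonneg hxge n) (hb1 n))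
      (summable_geometric_of_lt_one hxge hx1)
  have hna : Summable (fun n => ‖a n * x ^ n‖) :=
    hsa.congr (fun n => (Real.norm_of_nonneg (mul_nonneg (ha0 n) (pow_nonneg hxge n))).symm)
  have hnb : Summable (fun n => ‖b n * x ^ n‖) :=
    hsb.congr (fun n => (Real.norm_of_nonneg (mul_nonneg (hb0 n) (pow_nonneg hxge n))).symm)
  have hre : ∀ n, (∑ m ∈ Finset.range (n+1), (a m * x ^ m) * (b (n-m) * x ^ (n-m)))
      = (∑ m ∈ Finset.range (n+1), a m * b (n - m)) * x ^ n := by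
    intro n
    rw [Finset.sum_mul]
    refine Finset.sum_congr rfl (fun m hm => ?_)
    have hmn : m ≤ n := by
      simp only [Finset.mem_range] at hm
      omega
    have hxp : x ^ m * x ^ (n - m) = x ^ n := by
      rw [← pow_add]
      congr 1
      omega
    calc (a m * x ^ m) * (b (n-m) * x ^ (n-m))
        = a m * b (n-m) * (x ^ m * x ^ (n-m)) := by ring
      _ = a m * b (n - m) * x ^ n := by rw [hxp]
  constructor
  · exact ((summable_norm_sum_mul_range_of_summable_norm hna hnb).of_norm).congr hre
  · rw [← tsum_congr hre]
    exact (tsum_mul_tsum_eq_tsum_sum_range_of_summable_norm hna hnb).symm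

end LRWalk


/-- **Boundary values of the sojourn-time generating function** for the
`(L,R)`-random walk: for `x, y ∈ (0,1)` and `i ∈ {0,…,M−1}`,
`K_i(x,0) = G_i(x) − Σ_{j=0}^{M−1} H°_{i+M,j}(x)·G_{j−M}(x)` and
`K_i(0,y) = G_i(y) − y·Σ_{j=0}^{2M−1} π_{j−i}·G_j(y)
− y·Σ_{j=0}^{M−1} Σ_{k=−M}^{−1} π_{k−i}·H°_{kj}(y)·G_j(y)`. -/
theorem LRWalk.Kx0_K0y_formulas
    (Ω : Type*) [MeasurableSpace Ω] (μ : MeasureTheory.Measure Ω)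
    [MeasureTheory.IsProbabilityMeasure μ]
    (L R : ℕ) (hL : 1 ≤ L) (hR : 1 ≤ R) (M : ℕ) (hM : M = max L R)
    (π : ℤ → ℝ) (hnn : ∀ k, 0 ≤ π k)
    (hsupp : ∀ k : ℤ, k < -(L : ℤ) ∨ (R : ℤ) < k → π k = 0)
    (hsum : ∑ k ∈ Finset.Icc (-(L : ℤ)) (R : ℤ), π k = 1)
    (U : ℕ → Ω → ℤ) (hmeas : ∀ ℓ, Measurable (U ℓ))
    (hindep : ProbabilityTheory.iIndepFun U μ)
    (hdist : ∀ ℓ k, (μ {ω | U ℓ ω = k}).toReal = π k)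
    (F : Set ℤ)
    (x y : ℝ) (hx : x ∈ Set.Ioo (0 : ℝ) 1) (hy : y ∈ Set.Ioo (0 : ℝ) 1)
    (i : ℤ) (hi0 : 0 ≤ i) (hiM : i ≤ (M : ℤ) - 1) :
    (Kx0 μ U F i x
      = Gset μ U F i x
        - ∑ j ∈ Finset.Icc (0 : ℤ) ((M : ℤ) - 1),
            Hcirc μ U M (i + M) j x * Gset μ U F (j - M) x) ∧
    (K0y μ U F i y
      = Gset μ U F i y
        - y * ∑ j ∈ Finset.Icc (0 : ℤ) (2 * (M : ℤ) - 1), π (j - i) * Gset μ U F j y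
        - y * ∑ j ∈ Finset.Icc (0 : ℤ) ((M : ℤ) - 1),
            ∑ k ∈ Finset.Icc (-(M : ℤ)) (-1), π (k - i) * Hcirc μ U M k j y * Gset μ U F j y) := by
  
  classical
  open LRWalk in
  obtain ⟨hx0, hx1⟩ := hx
  obtain ⟨hy0, hy1⟩ := hy
  have hprob0 : ∀ S : Set Ω, 0 ≤ (μ S).toReal := fun S => ENNReal.toReal_nonneg
  have hprob1 : ∀ S : Set Ω, (μ S).toReal ≤ 1 := by
    intro S
    calc (μ S).toReal ≤ (1:ENNReal).toReal :=
          ENNReal.toReal_mono ENNReal.one_ne_top prob_le_one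
      _ = 1 := ENNReal.toReal_one
  have hgeo : ∀ (c : ℕ → ℝ), (∀ n, 0 ≤ c n) → (∀ n, c n ≤ 1) → ∀ {z : ℝ}, 0 < z → z < 1 →
      Summable (fun n => c n * z ^ n) := by
    intro c h0 h1 z hz0 hz1
    exact Summable.of_nonneg_of_le (fun n => mul_nonneg (h0 n) (pow_nonneg hz0.le n))
      (fun n => mul_le_of_le_one_left (pow_nonneg hz0.le n) (h1 n))
      (summable_geometric_of_lt_one hz0.le hz1)
  constructor
  · -- first identity
    have key1 : ∀ n : ℕ, (μ {ω | pos U i n ω ∈ F}).toReal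
        = (μ {ω | T U i n ω = n ∧ pos U i n ω ∈ F}).toReal
          + ∑ j ∈ Finset.Icc (0:ℤ) ((M:ℤ)-1), ∑ m ∈ Finset.range (n+1),
              (μ {ω | tauOEq U M (i+(M:ℤ)) m ω ∧ pos U (i+(M:ℤ)) m ω = j}).toReal
                * (μ {ω | pos U (j-(M:ℤ)) (n-m) ω ∈ F}).toReal := by
      intro n
      have h := perN1 (μ := μ) hM hnn hsum hmeas hindep hdist F i hi0 hiM n
      rw [h, ENNReal.toReal_add (measure_ne_top μ _) (ENNReal.sum_ne_top.2
        (fun j _ => ENNReal.sum_ne_top.2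
          (fun m _ => ENNReal.mul_ne_top (measure_ne_top μ _) (measure_ne_top μ _))))]
      congr 1
      rw [ENNReal.toReal_sum (fun j _ => ENNReal.sum_ne_top.2
        (fun m _ => ENNReal.mul_ne_top (measure_ne_top μ _) (measure_ne_top μ _)))]
      refine Finset.sum_congr rfl (fun j _ => ?_)
      rw [ENNReal.toReal_sum
        (fun m _ => ENNReal.mul_ne_top (measure_ne_top μ _) (measure_ne_top μ _))]
      exact Finset.sum_congr rfl (fun m _ => ENNReal.toReal_mul)
    have hchy := fun j : ℤ => cauchy_helper hx0 hx1
      (fun m => (μ {ω | tauOEq U M (i+(M:ℤ)) m ω ∧ pos U (i+(M:ℤ)) m ω = j}).toReal)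
      (fun m => (μ {ω | pos U (j-(M:ℤ)) m ω ∈ F}).toReal)
      (fun m => hprob0 _) (fun m => hprob1 _) (fun m => hprob0 _) (fun m => hprob1 _)
    have hGs : Gset μ U F i x
        = Kx0 μ U F i x + ∑ j ∈ Finset.Icc (0:ℤ) ((M:ℤ)-1),
            Hcirc μ U M (i+(M:ℤ)) j x * Gset μ U F (j-(M:ℤ)) x := by
      unfold Gset Kx0 Hcirc
      rw [tsum_congr (fun n => by rw [key1 n, add_mul, Finset.sum_mul])]
      rw [Summable.tsum_add (hgeo _ (fun n => hprob0 _) (fun n => hprob1 _) hx0 hx1)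
        (summable_sum (fun j _ => (hchy j).1))]
      congr 1
      rw [Summable.tsum_finsetSum (fun j _ => (hchy j).1)]
      exact Finset.sum_congr rfl (fun j _ => (hchy j).2)
    rw [hGs]
    ring
  · -- second identity
    have key2 : ∀ n : ℕ, (μ {ω | pos U i (n+1) ω ∈ F}).toReal
        = (μ {ω | T U i (n+1) ω = 0 ∧ pos U i (n+1) ω ∈ F}).toReal
          + ∑ j ∈ Finset.Icc (0:ℤ) (2*(M:ℤ)-1),
              π (j-i) * (μ {ω | pos U j n ω ∈ F}).toReal
          + ∑ j ∈ Finset.Icc (0:ℤ) ((M:ℤ)-1), ∑ k ∈ Finset.Icc (-(M:ℤ)) (-1),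
              π (k-i) * ∑ m ∈ Finset.range (n+1),
                (μ {ω | tauOEq U M k m ω ∧ pos U k m ω = j}).toReal
                  * (μ {ω | pos U j (n-m) ω ∈ F}).toReal := by
      intro n
      have h := perN2 (μ := μ) hM hnn hsum hmeas hindep hdist F i hi0 hiM n
      have hne2 : (∑ j ∈ Finset.Icc (0:ℤ) (2*(M:ℤ)-1),
          ENNReal.ofReal (π (j - i)) * μ {ω | pos U j n ω ∈ F}) ≠ ⊤ :=
        ENNReal.sum_ne_top.2
          (fun j _ => ENNReal.mul_ne_top ENNReal.ofReal_ne_top (measure_ne_top μ _))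
      have hne3 : (∑ j ∈ Finset.Icc (0:ℤ) ((M:ℤ)-1), ∑ k ∈ Finset.Icc (-(M:ℤ)) (-1),
          ENNReal.ofReal (π (k - i)) * ∑ m ∈ Finset.range (n+1),
            μ {ω | tauOEq U M k m ω ∧ pos U k m ω = j}
              * μ {ω | pos U j (n - m) ω ∈ F}) ≠ ⊤ :=
        ENNReal.sum_ne_top.2 (fun j _ => ENNReal.sum_ne_top.2 (fun k _ =>
          ENNReal.mul_ne_top ENNReal.ofReal_ne_top (ENNReal.sum_ne_top.2
            (fun m _ => ENNReal.mul_ne_top (measure_ne_top μ _) (measure_ne_top μ _)))))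
      rw [h, ENNReal.toReal_add (ENNReal.add_ne_top.2 ⟨measure_ne_top μ _, hne2⟩) hne3,
        ENNReal.toReal_add (measure_ne_top μ _) hne2]
      congr 1
      · congr 1
        rw [ENNReal.toReal_sum
          (fun j _ => ENNReal.mul_ne_top ENNReal.ofReal_ne_top (measure_ne_top μ _))]
        refine Finset.sum_congr rfl (fun j _ => ?_)
        rw [ENNReal.toReal_mul, ENNReal.toReal_ofReal (hnn _)]
      · rw [ENNReal.toReal_sum (fun j _ => ENNReal.sum_ne_top.2 (fun k _ =>
          ENNReal.mul_ne_top ENNReal.ofReal_ne_top (ENNReal.sum_ne_top.2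
            (fun m _ => ENNReal.mul_ne_top (measure_ne_top μ _) (measure_ne_top μ _)))))]
        refine Finset.sum_congr rfl (fun j _ => ?_)
        rw [ENNReal.toReal_sum (fun k _ =>
          ENNReal.mul_ne_top ENNReal.ofReal_ne_top (ENNReal.sum_ne_top.2
            (fun m _ => ENNReal.mul_ne_top (measure_ne_top μ _) (measure_ne_top μ _))))]
        refine Finset.sum_congr rfl (fun k _ => ?_)
        rw [ENNReal.toReal_mul, ENNReal.toReal_ofReal (hnn _)]
        congr 1
        rw [ENNReal.toReal_sum
          (fun m _ => ENNReal.mul_ne_top (measure_ne_top μ _) (measure_ne_top μ _))]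
        exact Finset.sum_congr rfl (fun m _ => ENNReal.toReal_mul)
    have hsaG : Summable (fun n => (μ {ω | pos U i n ω ∈ F}).toReal * y ^ n) :=
      hgeo _ (fun n => hprob0 _) (fun n => hprob1 _) hy0 hy1
    have hsbK : Summable
        (fun n => (μ {ω | T U i n ω = 0 ∧ pos U i n ω ∈ F}).toReal * y ^ n) :=
      hgeo _ (fun n => hprob0 _) (fun n => hprob1 _) hy0 hy1
    have hchy := fun (k j : ℤ) => cauchy_helper hy0 hy1
      (fun m => (μ {ω | tauOEq U M k m ω ∧ pos U k m ω = j}).toReal)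
      (fun m => (μ {ω | pos U j m ω ∈ F}).toReal)
      (fun m => hprob0 _) (fun m => hprob1 _) (fun m => hprob0 _) (fun m => hprob1 _)
    have hGrw : Gset μ U F i y = (μ {ω | pos U i 0 ω ∈ F}).toReal * y ^ 0
        + ∑' n : ℕ, (μ {ω | pos U i (n+1) ω ∈ F}).toReal * y ^ (n+1) :=
      Summable.tsum_eq_zero_add hsaG
    have hKrw : K0y μ U F i y = (μ {ω | T U i 0 ω = 0 ∧ pos U i 0 ω ∈ F}).toReal * y ^ 0
        + ∑' n : ℕ, (μ {ω | T U i (n+1) ω = 0 ∧ pos U i (n+1) ω ∈ F}).toReal * y ^ (n+1) :=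
      Summable.tsum_eq_zero_add hsbK
    have hT00 : (μ {ω | T U i 0 ω = 0 ∧ pos U i 0 ω ∈ F}).toReal
        = (μ {ω | pos U i 0 ω ∈ F}).toReal := by
      have hset : {ω : Ω | T U i 0 ω = 0 ∧ pos U i 0 ω ∈ F} = {ω | pos U i 0 ω ∈ F} := by
        ext ω
        simp only [Set.mem_setOf_eq]
        constructor
        · rintro ⟨_, h⟩; exact h
        · intro h
          refine ⟨?_, h⟩
          refine (T_eq_zero_iff i 0 ω).2 (fun m hm => ?_)
          simp only [Finset.mem_Icc] at hm
          omega
      rw [hset]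
    -- the main computation on the shifted series
    have hmain : (∑' n : ℕ, (μ {ω | pos U i (n+1) ω ∈ F}).toReal * y ^ (n+1))
        = (∑' n : ℕ, (μ {ω | T U i (n+1) ω = 0 ∧ pos U i (n+1) ω ∈ F}).toReal * y ^ (n+1))
          + y * ∑ j ∈ Finset.Icc (0:ℤ) (2*(M:ℤ)-1), π (j - i) * Gset μ U F j y
          + y * ∑ j ∈ Finset.Icc (0:ℤ) ((M:ℤ)-1), ∑ k ∈ Finset.Icc (-(M:ℤ)) (-1),
              π (k - i) * (Hcirc μ U M k j y * Gset μ U F j y) := by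
      have hE2 : ∀ n : ℕ, (∑ j ∈ Finset.Icc (0:ℤ) (2*(M:ℤ)-1),
          π (j-i) * (μ {ω | pos U j n ω ∈ F}).toReal) * y ^ (n+1)
          = y * ∑ j ∈ Finset.Icc (0:ℤ) (2*(M:ℤ)-1),
              π (j-i) * ((μ {ω | pos U j n ω ∈ F}).toReal * y ^ n) := by
        intro n
        rw [Finset.sum_mul, Finset.mul_sum]
        refine Finset.sum_congr rfl (fun j _ => ?_)
        rw [pow_succ]
        ring
      have hE3 : ∀ n : ℕ, (∑ j ∈ Finset.Icc (0:ℤ) ((M:ℤ)-1), ∑ k ∈ Finset.Icc (-(M:ℤ)) (-1),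
          π (k-i) * ∑ m ∈ Finset.range (n+1),
            (μ {ω | tauOEq U M k m ω ∧ pos U k m ω = j}).toReal
              * (μ {ω | pos U j (n-m) ω ∈ F}).toReal) * y ^ (n+1)
          = y * ∑ j ∈ Finset.Icc (0:ℤ) ((M:ℤ)-1), ∑ k ∈ Finset.Icc (-(M:ℤ)) (-1),
              π (k-i) * ((∑ m ∈ Finset.range (n+1),
                (μ {ω | tauOEq U M k m ω ∧ pos U k m ω = j}).toReal
                  * (μ {ω | pos U j (n-m) ω ∈ F}).toReal) * y ^ n) := by
        intro n
        rw [Finset.sum_mul, Finset.mul_sum]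
        refine Finset.sum_congr rfl (fun j _ => ?_)
        rw [Finset.sum_mul, Finset.mul_sum]
        refine Finset.sum_congr rfl (fun k _ => ?_)
        rw [pow_succ]
        ring
      have hsum2 : ∀ j : ℤ, Summable
          (fun n => π (j-i) * ((μ {ω | pos U j n ω ∈ F}).toReal * y ^ n)) :=
        fun j => (hgeo _ (fun n => hprob0 _) (fun n => hprob1 _) hy0 hy1).mul_left _
      have hsum3 : ∀ (j k : ℤ), Summable
          (fun n => π (k-i) * ((∑ m ∈ Finset.range (n+1),
            (μ {ω | tauOEq U M k m ω ∧ pos U k m ω = j}).toReal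
              * (μ {ω | pos U j (n-m) ω ∈ F}).toReal) * y ^ n)) :=
        fun j k => ((hchy k j).1).mul_left _
      rw [tsum_congr (fun n => by rw [key2 n, add_mul, add_mul, hE2 n, hE3 n])]
      rw [Summable.tsum_add (Summable.add
          ((summable_nat_add_iff 1).2 hsbK)
          ((summable_sum (fun j _ => hsum2 j)).mul_left y))
        ((summable_sum (fun j _ => summable_sum (fun k _ => hsum3 j k))).mul_left y)]
      rw [Summable.tsum_add ((summable_nat_add_iff 1).2 hsbK)
        ((summable_sum (fun j _ => hsum2 j)).mul_left y)]
      rw [tsum_mul_left, tsum_mul_left]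
      have hA : (∑' n : ℕ, ∑ j ∈ Finset.Icc (0:ℤ) (2*(M:ℤ)-1),
          π (j-i) * ((μ {ω | pos U j n ω ∈ F}).toReal * y ^ n))
          = ∑ j ∈ Finset.Icc (0:ℤ) (2*(M:ℤ)-1), π (j - i) * Gset μ U F j y := by
        rw [Summable.tsum_finsetSum (fun j _ => hsum2 j)]
        refine Finset.sum_congr rfl (fun j _ => ?_)
        rw [tsum_mul_left]
        rfl
      have hB : (∑' n : ℕ, ∑ j ∈ Finset.Icc (0:ℤ) ((M:ℤ)-1), ∑ k ∈ Finset.Icc (-(M:ℤ)) (-1),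
          π (k-i) * ((∑ m ∈ Finset.range (n+1),
            (μ {ω | tauOEq U M k m ω ∧ pos U k m ω = j}).toReal
              * (μ {ω | pos U j (n-m) ω ∈ F}).toReal) * y ^ n))
          = ∑ j ∈ Finset.Icc (0:ℤ) ((M:ℤ)-1), ∑ k ∈ Finset.Icc (-(M:ℤ)) (-1),
              π (k - i) * (Hcirc μ U M k j y * Gset μ U F j y) := by
        rw [Summable.tsum_finsetSum (fun j _ => summable_sum (fun k _ => hsum3 j k))]
        refine Finset.sum_congr rfl (fun j _ => ?_)
        rw [Summable.tsum_finsetSum (fun k _ => hsum3 j k)]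
        refine Finset.sum_congr rfl (fun k _ => ?_)
        rw [tsum_mul_left]
        congr 1
        exact (hchy k j).2
      rw [hA, hB]
    have hassoc : ∑ j ∈ Finset.Icc (0:ℤ) ((M:ℤ)-1), ∑ k ∈ Finset.Icc (-(M:ℤ)) (-1),
        π (k - i) * (Hcirc μ U M k j y * Gset μ U F j y)
        = ∑ j ∈ Finset.Icc (0:ℤ) ((M:ℤ)-1), ∑ k ∈ Finset.Icc (-(M:ℤ)) (-1),
            π (k - i) * Hcirc μ U M k j y * Gset μ U F j y := by
      refine Finset.sum_congr rfl (fun j _ => Finset.sum_congr rfl (fun k _ => ?_))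
      ring
    rw [hGrw, hKrw, hT00, hmain, hassoc]
    ring
end
end
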